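/- arXiv:2007.13949 — 4 statements merged into one kernel-verified Lean document; each statement's English description precedes it below -/
import Mathlib

section
/- For every positive integer r there exist positive real constants c₁ and c₂, depending only on r, such that for every finite field F of cardinality q one has c₁·q^(r²−1) ≤ #S(r,F) ≤ c₂·q^(r²−1). -/
open Matrix Finset

section Aux

variable {F : Type} [Field F] [Fintype F] [DecidableEq F] {r : ℕ}

theorem cfmb_cardS_eq (r : ℕ) :
    Nat.card {g : GL (Fin r) F | ∃ v : Fin r → F, v ≠ 0 ∧ Matrix.mulVec (↑g) v = v}
      = (univ.filter (fun M : Matrix (Fin r) (Fin r) F => M.det ≠ 0 ∧ (M - 1).det = 0)).card := by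
  have e : {g : GL (Fin r) F | ∃ v : Fin r → F, v ≠ 0 ∧ Matrix.mulVec (↑g) v = v} ≃
      {M : Matrix (Fin r) (Fin r) F // M.det ≠ 0 ∧ (M - 1).det = 0} := by
    refine ⟨fun g => ⟨↑g.1, ?_, ?_⟩, fun M => ⟨GeneralLinearGroup.mkOfDetNeZero M.1 M.2.1, ?_⟩,
      fun g => ?_, fun M => ?_⟩
    · exact isUnit_iff_ne_zero.mp ((isUnit_iff_isUnit_det _).mp g.1.isUnit)
    · obtain ⟨v, hv, hgv⟩ := g.2
      refine (Matrix.exists_mulVec_eq_zero_iff).mp ⟨v, hv, ?_⟩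
      rw [sub_mulVec, one_mulVec, hgv, sub_self]
    · obtain ⟨v, hv, hMv⟩ := (Matrix.exists_mulVec_eq_zero_iff).mpr M.2.2
      refine ⟨v, hv, ?_⟩
      have : (M.1 - 1) *ᵥ v = 0 := hMv
      rw [sub_mulVec, one_mulVec, sub_eq_zero] at this
      exact this
    · exact Subtype.ext (Units.ext rfl)
    · exact Subtype.ext rfl
  rw [Nat.card_congr e, Nat.card_eq_fintype_card, Fintype.card_subtype]

theorem cfmb_cardGL_eq (r : ℕ) :
    (univ.filter (fun M : Matrix (Fin r) (Fin r) F => M.det ≠ 0)).card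
      = Nat.card (GL (Fin r) F) := by
  rw [← Fintype.card_subtype, Nat.card_eq_fintype_card]
  refine Fintype.card_congr ⟨fun M => GeneralLinearGroup.mkOfDetNeZero M.1 M.2,
    fun g => ⟨↑g, isUnit_iff_ne_zero.mp ((isUnit_iff_isUnit_det _).mp g.isUnit)⟩,
    fun M => Subtype.ext rfl, fun g => Units.ext rfl⟩

theorem cfmb_cardA_eq (r : ℕ) :
    (univ.filter (fun M : Matrix (Fin r) (Fin r) F => (M - 1).det = 0)).card
      = (univ.filter (fun M : Matrix (Fin r) (Fin r) F => M.det = 0)).card := by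
  apply Finset.card_bij (fun M _ => M - 1)
  · intro M hM
    simp only [mem_filter, mem_univ, true_and] at hM ⊢
    exact hM
  · intro M hM N hN h
    exact sub_left_injective h
  · intro N hN
    simp only [mem_filter, mem_univ, true_and] at hN ⊢
    exact ⟨N + 1, by simpa using hN, by simp⟩

omit [Field F] [DecidableEq F] in
theorem cfmb_card_mat (r : ℕ) :
    Fintype.card (Matrix (Fin r) (Fin r) F) = Fintype.card F ^ (r * r) := by
  show Fintype.card (Fin r → Fin r → F) = _
  simp [Fintype.card_fun, pow_mul]

theorem cfmb_total_eq (r : ℕ) :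
    (univ.filter (fun M : Matrix (Fin r) (Fin r) F => M.det ≠ 0)).card
      + (univ.filter (fun M : Matrix (Fin r) (Fin r) F => M.det = 0)).card
      = Fintype.card F ^ (r * r) := by
  have h := Finset.card_filter_add_card_filter_not
    (s := (univ : Finset (Matrix (Fin r) (Fin r) F))) (p := fun M => M.det = 0)
  rw [Finset.card_univ, cfmb_card_mat] at h
  rw [add_comm, ← h]

theorem cfmb_split_eq (r : ℕ) :
    (univ.filter (fun M : Matrix (Fin r) (Fin r) F => M.det ≠ 0 ∧ (M - 1).det = 0)).card
      + (univ.filter (fun M : Matrix (Fin r) (Fin r) F => M.det = 0 ∧ (M - 1).det = 0)).card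
      = (univ.filter (fun M : Matrix (Fin r) (Fin r) F => (M - 1).det = 0)).card := by
  have h := Finset.card_filter_add_card_filter_not
    (s := univ.filter (fun M : Matrix (Fin r) (Fin r) F => (M - 1).det = 0))
    (p := fun M => M.det ≠ 0)
  rw [Finset.filter_filter, Finset.filter_filter] at h
  rw [← h]
  congr 2
  · ext M; simp [and_comm]
  · ext M; simp [and_comm]

def NvSet (F : Type) [Field F] [Fintype F] [DecidableEq F] (r : ℕ) : Finset (Fin r → F) :=
  univ.filter (fun v => ∃ i, v i = 1 ∧ ∀ k, k < i → v k = 0)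

theorem ne_zero_of_mem_NvSet {v : Fin r → F} (hv : v ∈ NvSet F r) : v ≠ 0 := by
  simp only [NvSet, mem_filter, mem_univ, true_and] at hv
  obtain ⟨i, hi, -⟩ := hv
  intro h; rw [h] at hi; simp at hi

theorem cfmb_exists_norm {v : Fin r → F} (hv : v ≠ 0) : ∃ c : F, c ≠ 0 ∧ c • v ∈ NvSet F r := by
  have hne : (univ.filter (fun k => v k ≠ 0)).Nonempty := by
    obtain ⟨k, hk⟩ := Function.ne_iff.mp hv
    exact ⟨k, by simpa using hk⟩
  set i := (univ.filter (fun k => v k ≠ 0)).min' hne with hi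
  have hvi : v i ≠ 0 := by
    have := Finset.min'_mem _ hne
    simpa [hi] using (Finset.mem_filter.mp this).2
  refine ⟨(v i)⁻¹, inv_ne_zero hvi, ?_⟩
  simp only [NvSet, mem_filter, mem_univ, true_and]
  refine ⟨i, by simp [inv_mul_cancel₀ hvi], fun k hk => ?_⟩
  have : v k = 0 := by
    by_contra h
    have hkmem : k ∈ univ.filter (fun k => v k ≠ 0) := by simpa using h
    exact absurd (Finset.min'_le _ k hkmem) (by omega)
  simp [this]

theorem cfmb_NvSet_card : (NvSet F r).card ≤ r * Fintype.card F ^ (r - 1) := by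
  have hsub : NvSet F r
      ⊆ univ.biUnion (fun i : Fin r => univ.filter (fun v : Fin r → F => v i = 1)) := by
    intro v hv
    simp only [NvSet, mem_filter, mem_univ, true_and] at hv
    obtain ⟨i, hi, -⟩ := hv
    simp only [mem_biUnion, mem_univ, mem_filter, true_and]
    exact ⟨i, hi⟩
  calc (NvSet F r).card ≤ _ := Finset.card_le_card hsub
    _ ≤ ∑ i : Fin r, (univ.filter (fun v : Fin r → F => v i = 1)).card :=
        Finset.card_biUnion_le
    _ ≤ ∑ _i : Fin r, Fintype.card F ^ (r - 1) := by
        refine Finset.sum_le_sum fun i _ => ?_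
        have h1 : (univ.filter (fun v : Fin r → F => v i = 1)).card
            ≤ (univ : Finset ({k : Fin r // k ≠ i} → F)).card := by
          refine Finset.card_le_card_of_injOn (fun v k => v k.1) (fun _ _ => mem_univ _) ?_
          intro v hv w hw h
          simp only [mem_coe, mem_filter, mem_univ, true_and] at hv hw
          funext k
          by_cases hk : k = i
          · rw [hk, hv, hw]
          · exact congrFun h ⟨k, hk⟩
        have h2 : Fintype.card {k : Fin r // k ≠ i} = r - 1 := by
          have h3 : Fintype.card {k : Fin r // ¬ (k = i)} = r - 1 := by
            rw [Fintype.card_subtype_compl, Fintype.card_subtype_eq, Fintype.card_fin]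
          exact h3
        calc _ ≤ _ := h1
          _ = Fintype.card F ^ (r - 1) := by
              rw [Finset.card_univ, Fintype.card_fun, h2]
    _ = r * Fintype.card F ^ (r - 1) := by simp [mul_comm]

theorem cfmb_B_card {v w : Fin r → F} (hv : v ∈ NvSet F r) (hw : w ∈ NvSet F r) :
    (univ.filter (fun M : Matrix (Fin r) (Fin r) F => M *ᵥ v = 0 ∧ M *ᵥ w = w)).card
      ≤ Fintype.card F ^ (r * (r - 2)) := by
  by_cases hdep : ∃ c : F, w = c • v
  · have h0 : univ.filter (fun M : Matrix (Fin r) (Fin r) F => M *ᵥ v = 0 ∧ M *ᵥ w = w) = ∅ := by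
      refine Finset.eq_empty_of_forall_notMem fun M hM => ?_
      simp only [mem_filter, mem_univ, true_and] at hM
      obtain ⟨c, rfl⟩ := hdep
      have : M *ᵥ c • v = c • (M *ᵥ v) := mulVec_smul M c v
      rw [hM.1, smul_zero] at this
      exact ne_zero_of_mem_NvSet hw (hM.2 ▸ this)
    simp [h0]
  · simp only [NvSet, mem_filter, mem_univ, true_and] at hv
    obtain ⟨i, hvi, -⟩ := hv
    set u : Fin r → F := w - (w i) • v with hu
    have hui : u i = 0 := by simp [hu, hvi]
    have hune : u ≠ 0 := fun h => hdep ⟨w i, by rwa [hu, sub_eq_zero] at h⟩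
    obtain ⟨j, huj⟩ := Function.ne_iff.mp hune
    have huj : u j ≠ 0 := by simpa using huj
    have hij : j ≠ i := fun h => huj (h ▸ hui)
    have hcard : Fintype.card {k : Fin r // k ≠ i ∧ k ≠ j} ≤ r - 2 := by
      have heq : (univ.filter (fun k : Fin r => k ≠ i ∧ k ≠ j)) = univ \ {i, j} := by
        ext k; simp [not_or]
      rw [Fintype.card_subtype, heq, Finset.card_sdiff_of_subset (by simp), Finset.card_univ,
        Fintype.card_fin, Finset.card_pair (Ne.symm hij)]
    have h1 : (univ.filter (fun M : Matrix (Fin r) (Fin r) F => M *ᵥ v = 0 ∧ M *ᵥ w = w)).card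
        ≤ (univ : Finset ({k : Fin r // k ≠ i ∧ k ≠ j} → Fin r → F)).card := by
      refine Finset.card_le_card_of_injOn (fun M k l => M l k.1) (fun _ _ => mem_univ _) ?_
      intro M hM M' hM' h
      simp only [mem_coe, mem_filter, mem_univ, true_and] at hM hM'
      have hoff : ∀ l k, k ≠ i → k ≠ j → M l k = M' l k := fun l k hki hkj =>
        congrFun (congrFun h ⟨k, hki, hkj⟩) l
      have hMu : M *ᵥ u = w := by
        rw [hu, mulVec_sub, mulVec_smul, hM.1, hM.2, smul_zero, sub_zero]
      have hM'u : M' *ᵥ u = w := by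
        rw [hu, mulVec_sub, mulVec_smul, hM'.1, hM'.2, smul_zero, sub_zero]
      have key : ∀ (l : Fin r) (z : Fin r → F), M *ᵥ z = M' *ᵥ z →
          (M l i - M' l i) * z i + (M l j - M' l j) * z j = 0 := by
        intro l z hz
        have hsum : ∑ k, (M l k - M' l k) * z k = 0 := by
          have hl := congrFun hz l
          simp only [mulVec, dotProduct] at hl
          rw [← sub_eq_zero] at hl
          rw [← hl, ← Finset.sum_sub_distrib]
          congr 1; funext k; ring
        have hsub : ∑ k ∈ ({i, j} : Finset (Fin r)), (M l k - M' l k) * z k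
            = ∑ k, (M l k - M' l k) * z k := by
          refine Finset.sum_subset (Finset.subset_univ _) fun k _ hk => ?_
          simp only [mem_insert, mem_singleton, not_or] at hk
          rw [hoff l k hk.1 hk.2, sub_self, zero_mul]
        rw [← hsub, Finset.sum_pair (Ne.symm hij)] at hsum
        exact hsum
      have hj0 : ∀ l, M l j = M' l j := by
        intro l
        have hk := key l u (by rw [hMu, hM'u])
        rw [hui, mul_zero, zero_add] at hk
        rcases mul_eq_zero.mp hk with h' | h'
        · exact sub_eq_zero.mp h'
        · exact absurd h' huj
      have hi0 : ∀ l, M l i = M' l i := by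
        intro l
        have hk := key l v (by rw [hM.1, hM'.1])
        rw [hvi, mul_one, hj0 l, sub_self, zero_mul, add_zero] at hk
        exact sub_eq_zero.mp hk
      funext l k
      by_cases hki : k = i
      · rw [hki]; exact hi0 l
      · by_cases hkj : k = j
        · rw [hkj]; exact hj0 l
        · exact hoff l k hki hkj
    calc _ ≤ _ := h1
      _ ≤ Fintype.card F ^ (r * (r - 2)) := by
          rw [Finset.card_univ, Fintype.card_fun, Fintype.card_fun, Fintype.card_fin, ← pow_mul]
          exact Nat.pow_le_pow_right (Nat.pos_of_ne_zero Fintype.card_ne_zero)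
            (by nlinarith [hcard])

theorem cfmb_D_bound (r : ℕ) :
    (univ.filter (fun M : Matrix (Fin r) (Fin r) F => M.det = 0 ∧ (M - 1).det = 0)).card
      ≤ r ^ 2 * Fintype.card F ^ (2 * (r - 1) + r * (r - 2)) := by
  have hsub : (univ.filter (fun M : Matrix (Fin r) (Fin r) F => M.det = 0 ∧ (M - 1).det = 0))
      ⊆ (NvSet F r ×ˢ NvSet F r).biUnion
        (fun p => univ.filter
          (fun M : Matrix (Fin r) (Fin r) F => M *ᵥ p.1 = 0 ∧ M *ᵥ p.2 = p.2)) := by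
    intro M hM
    simp only [mem_filter, mem_univ, true_and] at hM
    obtain ⟨v0, hv0, hMv0⟩ := (Matrix.exists_mulVec_eq_zero_iff).mpr hM.1
    obtain ⟨w0, hw0, hMw0⟩ := (Matrix.exists_mulVec_eq_zero_iff).mpr hM.2
    have hMw0' : M *ᵥ w0 = w0 := by
      rw [sub_mulVec, one_mulVec, sub_eq_zero] at hMw0; exact hMw0
    obtain ⟨c, hc, hcv⟩ := cfmb_exists_norm hv0
    obtain ⟨d, hd, hdw⟩ := cfmb_exists_norm hw0
    simp only [mem_biUnion, mem_product, mem_filter, mem_univ, true_and]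
    refine ⟨(c • v0, d • w0), ⟨hcv, hdw⟩, ?_, ?_⟩
    · rw [mulVec_smul, hMv0, smul_zero]
    · rw [mulVec_smul, hMw0']
  calc _ ≤ _ := Finset.card_le_card hsub
    _ ≤ ∑ p ∈ NvSet F r ×ˢ NvSet F r,
        (univ.filter
          (fun M : Matrix (Fin r) (Fin r) F => M *ᵥ p.1 = 0 ∧ M *ᵥ p.2 = p.2)).card :=
        Finset.card_biUnion_le
    _ ≤ (NvSet F r ×ˢ NvSet F r).card * Fintype.card F ^ (r * (r - 2)) := by
        rw [← smul_eq_mul]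
        refine Finset.sum_le_card_nsmul _ _ _ fun p hp => ?_
        rw [mem_product] at hp
        exact cfmb_B_card hp.1 hp.2
    _ ≤ r ^ 2 * Fintype.card F ^ (2 * (r - 1) + r * (r - 2)) := by
        rw [Finset.card_product]
        have h := cfmb_NvSet_card (F := F) (r := r)
        calc (NvSet F r).card * (NvSet F r).card * Fintype.card F ^ (r * (r - 2))
            ≤ (r * Fintype.card F ^ (r - 1)) * (r * Fintype.card F ^ (r - 1))
              * Fintype.card F ^ (r * (r - 2)) :=
              Nat.mul_le_mul (Nat.mul_le_mul h h) le_rfl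
          _ = r ^ 2 * Fintype.card F ^ (2 * (r - 1) + r * (r - 2)) := by ring

end Aux

section RealAux

theorem cfmb_geom_le {x : ℝ} (hx : 2 ≤ x) (n : ℕ) : ∑ i ∈ range (n + 1), x ^ i ≤ 2 * x ^ n := by
  induction n with
  | zero => norm_num
  | succ n ih =>
      rw [Finset.sum_range_succ]
      have hxn : (0:ℝ) ≤ x ^ n := by positivity
      have h1 : 2 * x ^ n ≤ x * x ^ n := by nlinarith
      have h2 : x * x ^ n = x ^ (n+1) := by ring
      calc ∑ i ∈ range (n+1), x ^ i + x ^ (n+1) ≤ 2 * x ^ n + x ^ (n+1) := by linarith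
        _ ≤ x ^ (n+1) + x ^ (n+1) := by linarith [h2 ▸ h1]
        _ = 2 * x ^ (n+1) := by ring

theorem cfmb_prod_aux {x : ℝ} (hx : 2 ≤ x) (r : ℕ) :
    ∀ n, n ≤ r → x ^ r * (x ^ (r * n) - ∏ i ∈ range n, (x ^ r - x ^ i))
      ≤ (∑ i ∈ range n, x ^ i) * x ^ (r * n) := by
  have hx0 : (0:ℝ) < x := by linarith
  have hfac : ∀ i, i ≤ r → (0:ℝ) ≤ x ^ r - x ^ i := fun i hi => by
    have := pow_le_pow_right₀ (by linarith : (1:ℝ) ≤ x) hi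
    linarith
  intro n
  induction n with
  | zero => simp
  | succ n ih =>
      intro hn
      have hn' : n ≤ r := Nat.le_of_succ_le hn
      have hprod_nonneg : (0:ℝ) ≤ ∏ i ∈ range n, (x ^ r - x ^ i) :=
        Finset.prod_nonneg fun i hi => hfac i (le_of_lt (lt_of_lt_of_le (mem_range.mp hi) hn'))
      have hprod_le : ∏ i ∈ range n, (x ^ r - x ^ i) ≤ x ^ (r * n) := by
        rw [show x ^ (r * n) = ∏ _i ∈ range n, x ^ r by
          rw [Finset.prod_const, ← pow_mul, Finset.card_range, mul_comm]]
        refine Finset.prod_le_prod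
          (fun i hi => hfac i (le_of_lt (lt_of_lt_of_le (mem_range.mp hi) hn')))
          (fun i hi => by
            have : (0:ℝ) ≤ x ^ i := by positivity
            linarith)
      rw [Finset.prod_range_succ, Finset.sum_range_succ]
      have hih := ih hn'
      have hxn : (0:ℝ) ≤ x ^ n := by positivity
      have hfn : (0:ℝ) ≤ x ^ r - x ^ n := hfac n hn'
      have expand : x ^ r * (x ^ (r * (n+1)) - (∏ i ∈ range n, (x ^ r - x ^ i)) * (x ^ r - x ^ n))
          = (x ^ r - x ^ n) * (x ^ r * (x ^ (r * n) - ∏ i ∈ range n, (x ^ r - x ^ i)))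
            + x ^ n * x ^ r * x ^ (r * n) := by
        rw [show r * (n+1) = r * n + r by ring, pow_add]
        ring
      rw [expand]
      have step1 : (x ^ r - x ^ n) * (x ^ r * (x ^ (r * n) - ∏ i ∈ range n, (x ^ r - x ^ i)))
          ≤ (x ^ r - x ^ n) * ((∑ i ∈ range n, x ^ i) * x ^ (r * n)) :=
        mul_le_mul_of_nonneg_left hih hfn
      have hsumpos : (0:ℝ) ≤ (∑ i ∈ range n, x ^ i) * x ^ (r * n) :=
        mul_nonneg (Finset.sum_nonneg fun i _ => by positivity) (by positivity)
      have step2 : (x ^ r - x ^ n) * ((∑ i ∈ range n, x ^ i) * x ^ (r * n))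
          ≤ x ^ r * ((∑ i ∈ range n, x ^ i) * x ^ (r * n)) := by nlinarith
      have final : x ^ r * ((∑ i ∈ range n, x ^ i) * x ^ (r * n)) + x ^ n * x ^ r * x ^ (r * n)
          = ((∑ i ∈ range n, x ^ i) + x ^ n) * x ^ (r * (n+1)) := by
        rw [show r * (n+1) = r * n + r by ring, pow_add]
        ring
      linarith

theorem cfmb_prod_lb {x : ℝ} (hx : 2 ≤ x) {r : ℕ} (hr : 0 < r) :
    x ^ (r * r) - 2 * x ^ (r * r - 1) ≤ ∏ i ∈ range r, (x ^ r - x ^ i) := by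
  have hx0 : (0:ℝ) < x := by linarith
  have h := cfmb_prod_aux hx r r le_rfl
  have hgeom : ∑ i ∈ range r, x ^ i ≤ 2 * x ^ (r - 1) := by
    have := cfmb_geom_le hx (r - 1)
    rwa [Nat.sub_add_cancel hr] at this
  have hkey : x ^ (r - 1) * x ^ (r * r) = x ^ r * x ^ (r * r - 1) := by
    rw [← pow_add, ← pow_add]
    congr 1
    have h1 : 1 ≤ r * r := Nat.mul_le_mul hr hr
    omega
  have h2 : x ^ r * (x ^ (r * r) - ∏ i ∈ range r, (x ^ r - x ^ i))
      ≤ x ^ r * (2 * x ^ (r * r - 1)) := by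
    have hxr : (0:ℝ) ≤ x ^ (r * r) := by positivity
    calc x ^ r * (x ^ (r * r) - ∏ i ∈ range r, (x ^ r - x ^ i))
        ≤ (∑ i ∈ range r, x ^ i) * x ^ (r * r) := h
      _ ≤ (2 * x ^ (r - 1)) * x ^ (r * r) := mul_le_mul_of_nonneg_right hgeom hxr
      _ = x ^ r * (2 * x ^ (r * r - 1)) := by rw [mul_assoc, hkey]; ring
  have := le_of_mul_le_mul_left h2 (by positivity : (0:ℝ) < x ^ r)
  linarith

theorem cfmb_prod_ub {x : ℝ} (hx : 2 ≤ x) {r : ℕ} (hr : 0 < r) :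
    ∏ i ∈ range r, (x ^ r - x ^ i) ≤ (x - 1) * x ^ (r * r - 1) := by
  have hx0 : (0:ℝ) < x := by linarith
  have hfac : ∀ i, i ≤ r → (0:ℝ) ≤ x ^ r - x ^ i := fun i hi => by
    have := pow_le_pow_right₀ (by linarith : (1:ℝ) ≤ x) hi
    linarith
  obtain ⟨m, rfl⟩ : ∃ m, r = m + 1 := ⟨r - 1, by omega⟩
  rw [Finset.prod_range_succ]
  have h1 : ∏ i ∈ range m, (x ^ (m+1) - x ^ i) ≤ x ^ ((m+1) * m) := by
    rw [show x ^ ((m+1) * m) = ∏ _i ∈ range m, x ^ (m+1) by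
      rw [Finset.prod_const, ← pow_mul, Finset.card_range, mul_comm]]
    refine Finset.prod_le_prod (fun i hi => hfac i (by simp at hi; omega))
      (fun i hi => by
        have : (0:ℝ) ≤ x ^ i := by positivity
        linarith)
  have h2 : x ^ (m+1) - x ^ m = x ^ m * (x - 1) := by
    rw [pow_succ]
    ring
  have h3 : (0:ℝ) ≤ x ^ (m+1) - x ^ m := hfac m (by omega)
  calc (∏ i ∈ range m, (x ^ (m+1) - x ^ i)) * (x ^ (m+1) - x ^ m)
      ≤ x ^ ((m+1) * m) * (x ^ (m+1) - x ^ m) := mul_le_mul_of_nonneg_right h1 h3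
    _ = (x - 1) * (x ^ ((m+1) * m) * x ^ m) := by rw [h2]; ring
    _ = (x - 1) * x ^ ((m+1) * (m+1) - 1) := by
        have hexp : (m+1)*m + m = (m+1)*(m+1) - 1 := by
          have : (m+1)*(m+1) = (m+1)*m + m + 1 := by ring
          omega
        rw [← pow_add, hexp]

end RealAux

/-- For every positive integer `r` there exist positive real constants `c₁`, `c₂`,
depending only on `r`, such that for every finite field `F` of cardinality `q`,
`c₁ * q ^ (r² - 1) ≤ #S(r, F) ≤ c₂ * q ^ (r² - 1)`, where `S(r, F)` is the set of
invertible matrices fixing some nonzero vector. -/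
theorem card_fixing_matrices_bounds (r : ℕ) (hr : 0 < r) :
    ∃ c₁ c₂ : ℝ, 0 < c₁ ∧ 0 < c₂ ∧
      ∀ (F : Type) [Field F] [Fintype F],
        c₁ * (Fintype.card F : ℝ) ^ (r ^ 2 - 1) ≤
            (Nat.card {g : GL (Fin r) F |
              ∃ v : Fin r → F, v ≠ 0 ∧ Matrix.mulVec (↑g) v = v} : ℝ) ∧
          (Nat.card {g : GL (Fin r) F |
              ∃ v : Fin r → F, v ≠ 0 ∧ Matrix.mulVec (↑g) v = v} : ℝ) ≤
            c₂ * (Fintype.card F : ℝ) ^ (r ^ 2 - 1) := by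
  have hc1pos : (0:ℝ) < min (1/2) (1 / (2 * (r:ℝ)^2)^(r * r - 1)) := by
    have hr1 : (1:ℝ) ≤ (r:ℝ) := by exact_mod_cast hr
    have h1 : (0:ℝ) < (2 * (r:ℝ)^2)^(r * r - 1) := by positivity
    have h2 : (0:ℝ) < 1 / (2 * (r:ℝ)^2)^(r * r - 1) := by positivity
    exact lt_min (by norm_num) h2
  refine ⟨min (1/2) (1 / (2 * (r:ℝ)^2)^(r * r - 1)), 2, hc1pos, by norm_num, ?_⟩
  intro F _ _
  classical
  have hq2 : 2 ≤ Fintype.card F := Fintype.one_lt_card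
  set q := Fintype.card F with hqdef
  have hx2 : (2:ℝ) ≤ (q:ℝ) := by exact_mod_cast hq2
  have hx0 : (0:ℝ) < (q:ℝ) := by linarith
  have hcardS : Nat.card {g : GL (Fin r) F |
      ∃ v : Fin r → F, v ≠ 0 ∧ Matrix.mulVec (↑g) v = v}
      = (univ.filter (fun M : Matrix (Fin r) (Fin r) F =>
          M.det ≠ 0 ∧ (M - 1).det = 0)).card := cfmb_cardS_eq r
  have h1 := cfmb_split_eq (F := F) r
  have h2 := cfmb_cardA_eq (F := F) r
  have h3 := cfmb_total_eq (F := F) r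
  have hkeyN : (univ.filter (fun M : Matrix (Fin r) (Fin r) F => M.det ≠ 0)).card
      + ((univ.filter (fun M : Matrix (Fin r) (Fin r) F =>
            M.det ≠ 0 ∧ (M - 1).det = 0)).card
        + (univ.filter (fun M : Matrix (Fin r) (Fin r) F =>
            M.det = 0 ∧ (M - 1).det = 0)).card) = q ^ (r * r) := by
    rw [h1, h2]
    exact h3
  set Sc := (univ.filter (fun M : Matrix (Fin r) (Fin r) F =>
      M.det ≠ 0 ∧ (M - 1).det = 0)).card with hSc
  set Dc := (univ.filter (fun M : Matrix (Fin r) (Fin r) F =>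
      M.det = 0 ∧ (M - 1).det = 0)).card with hDc
  set Gc := (univ.filter (fun M : Matrix (Fin r) (Fin r) F => M.det ≠ 0)).card with hGc
  have hGreal : (Gc:ℝ) = ∏ i ∈ range r, ((q:ℝ) ^ r - (q:ℝ) ^ i) := by
    rw [hGc, cfmb_cardGL_eq r, Matrix.card_GL_field, ← hqdef]
    rw [Nat.cast_prod, Fin.prod_univ_eq_prod_range (fun i => ((q ^ r - q ^ i : ℕ) : ℝ))]
    refine Finset.prod_congr rfl fun i hi => ?_
    rw [Nat.cast_sub (Nat.pow_le_pow_right (by omega) (le_of_lt (mem_range.mp hi)))]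
    push_cast
    rfl
  have hGub : (Gc:ℝ) ≤ ((q:ℝ) - 1) * (q:ℝ) ^ (r * r - 1) := hGreal ▸ cfmb_prod_ub hx2 hr
  have hGlb : (q:ℝ) ^ (r * r) - 2 * (q:ℝ) ^ (r * r - 1) ≤ (Gc:ℝ) :=
    hGreal ▸ cfmb_prod_lb hx2 hr
  have hD : (Dc:ℝ) ≤ (r:ℝ) ^ 2 * (q:ℝ) ^ (2 * (r - 1) + r * (r - 2)) := by
    have hD' := cfmb_D_bound (F := F) r
    rw [← hDc, ← hqdef] at hD'
    calc (Dc:ℝ) ≤ ((r ^ 2 * q ^ (2 * (r - 1) + r * (r - 2)) : ℕ) : ℝ) := by exact_mod_cast hD'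
      _ = (r:ℝ) ^ 2 * (q:ℝ) ^ (2 * (r - 1) + r * (r - 2)) := by push_cast; rfl
  have hS1 : 1 ≤ Sc := by
    haveI : Nonempty (Fin r) := Fin.pos_iff_nonempty.mp hr
    rw [hSc, Finset.one_le_card]
    refine ⟨1, ?_⟩
    rw [mem_filter]
    refine ⟨mem_univ _, ?_, ?_⟩
    · rw [Matrix.det_one]; exact one_ne_zero
    · rw [sub_self, Matrix.det_zero]
  have hD0 : (0:ℝ) ≤ (Dc:ℝ) := by positivity
  have hkeyR : (Gc:ℝ) + ((Sc:ℝ) + (Dc:ℝ)) = (q:ℝ) ^ (r * r) := by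
    have := congrArg (Nat.cast : ℕ → ℝ) hkeyN
    push_cast at this
    exact this
  have hrr : r ^ 2 - 1 = r * r - 1 := by rw [pow_two]
  rw [hcardS, hrr]
  constructor
  · -- lower bound
    by_cases hbig : 2 ≤ r ∧ 2 * (r:ℝ)^2 ≤ (q:ℝ)
    · obtain ⟨hr2, hbx⟩ := hbig
      have hexp : 2 * (r - 1) + r * (r - 2) = r * r - 2 := by
        have e1 : r * (r - 2) + 2 * r = r * r := by
          cases' Nat.exists_eq_add_of_le hr2 with s hs
          subst hs
          have e2 : (2 + s) * ((2 + s) - 2) = (2 + s) * s := by norm_num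
          rw [e2]
          ring
        omega
      have hstep1 : (q:ℝ) ^ (r * r - 2) * (q:ℝ) = (q:ℝ) ^ (r * r - 1) := by
        rw [← pow_succ]
        congr 1
        have h4 : 4 ≤ r * r := Nat.mul_le_mul hr2 hr2
        omega
      have hstep2 : (q:ℝ) ^ (r * r - 1) * (q:ℝ) = (q:ℝ) ^ (r * r) := by
        rw [← pow_succ]
        congr 1
        have h4 : 1 ≤ r * r := Nat.mul_le_mul hr hr
        omega
      have hD' : (Dc:ℝ) ≤ (1/2) * (q:ℝ) ^ (r * r - 1) := by
        rw [hexp] at hD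
        have hp2 : (0:ℝ) ≤ (q:ℝ) ^ (r * r - 2) := by positivity
        calc (Dc:ℝ) ≤ (r:ℝ)^2 * (q:ℝ) ^ (r * r - 2) := hD
          _ ≤ ((q:ℝ) / 2) * (q:ℝ) ^ (r * r - 2) := by nlinarith
          _ = (1/2) * (q:ℝ) ^ (r * r - 1) := by rw [← hstep1]; ring
      have hGub' : (Gc:ℝ) ≤ (q:ℝ) ^ (r * r) - (q:ℝ) ^ (r * r - 1) := by
        have e3 : ((q:ℝ) - 1) * (q:ℝ) ^ (r * r - 1)
            = (q:ℝ) ^ (r * r) - (q:ℝ) ^ (r * r - 1) := by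
          rw [← hstep2]; ring
        linarith [e3 ▸ hGub]
      have hSlb : (1/2) * (q:ℝ) ^ (r * r - 1) ≤ (Sc:ℝ) := by linarith
      calc min (1/2) (1 / (2 * (r:ℝ)^2)^(r * r - 1)) * (q:ℝ) ^ (r * r - 1)
          ≤ (1/2) * (q:ℝ) ^ (r * r - 1) :=
            mul_le_mul_of_nonneg_right (min_le_left _ _) (by positivity)
        _ ≤ (Sc:ℝ) := hSlb
    · -- trivial branch
      have hSge1 : (1:ℝ) ≤ (Sc:ℝ) := by exact_mod_cast hS1
      have hbound : min (1/2) (1 / (2 * (r:ℝ)^2)^(r * r - 1)) * (q:ℝ) ^ (r * r - 1) ≤ 1 := by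
        rcases not_and_or.mp hbig with hr1 | hxsmall
        · have hre : r = 1 := by omega
          subst hre
          norm_num
        · push_neg at hxsmall
          have hxle : (q:ℝ) ≤ 2 * (r:ℝ)^2 := le_of_lt hxsmall
          have hr1 : (1:ℝ) ≤ (r:ℝ) := by exact_mod_cast hr
          have h2r : (0:ℝ) < 2 * (r:ℝ)^2 := by positivity
          have hple : (q:ℝ) ^ (r * r - 1) ≤ (2 * (r:ℝ)^2) ^ (r * r - 1) :=
            pow_le_pow_left₀ (by linarith) hxle _
          calc min (1/2) (1 / (2 * (r:ℝ)^2)^(r * r - 1)) * (q:ℝ) ^ (r * r - 1)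
              ≤ (1 / (2 * (r:ℝ)^2)^(r * r - 1)) * (2 * (r:ℝ)^2) ^ (r * r - 1) :=
                mul_le_mul (min_le_right _ _) hple (by positivity) (by positivity)
            _ = 1 := by field_simp
      linarith
  · -- upper bound
    calc (Sc:ℝ) ≤ (q:ℝ) ^ (r * r) - (Gc:ℝ) := by linarith
      _ ≤ 2 * (q:ℝ) ^ (r * r - 1) := by linarith
end

section
/- For every positive integer r there exist positive real constants c₁' and c₂', depending only on r, such that for every finite field F of cardinality q one has c₁'/q ≤ #S(r,F) / #GL(r,F) ≤ c₂'/q. -/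
open Matrix


set_option linter.unusedSectionVars false
set_option maxHeartbeats 1600000
open Finset

section Aux
variable {F : Type} [Field F] [Fintype F] {r : ℕ}


private lemma exists_basis_single (hr : 0 < r) {v : Fin r → F} (hv : v ≠ 0) :
    ∃ b : Module.Basis (Fin r) F (Fin r → F), b ⟨0, hr⟩ = v := by
  classical
  have hs : LinearIndepOn F id ({v} : Set (Fin r → F)) :=
    (linearIndepOn_singleton_iff F).mpr hv
  let B := Module.Basis.extend hs
  haveI : Fintype (hs.extend (Set.subset_univ _)) := FiniteDimensional.fintypeBasisIndex B
  have hcard : Fintype.card (hs.extend (Set.subset_univ _)) = r := by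
    have h1 := Module.finrank_eq_card_basis B
    rw [Module.finrank_fintype_fun_eq_card, Fintype.card_fin] at h1; exact h1.symm
  have hvt : v ∈ hs.extend (Set.subset_univ _) := hs.subset_extend _ rfl
  let e0 : Fin r ≃ (hs.extend (Set.subset_univ _)) :=
    Fintype.equivOfCardEq (by rw [Fintype.card_fin, hcard])
  let e : Fin r ≃ (hs.extend (Set.subset_univ _)) :=
    (Equiv.swap (⟨0, hr⟩ : Fin r) (e0.symm ⟨v, hvt⟩)).trans e0
  refine ⟨B.reindex e.symm, ?_⟩
  rw [Module.Basis.reindex_apply, Equiv.symm_symm]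
  have : e ⟨0, hr⟩ = ⟨v, hvt⟩ := by
    simp [e, Equiv.swap_apply_left]
  rw [this]
  exact Module.Basis.extend_apply_self hs _


private lemma exists_basis_pair (hr : 2 ≤ r) {v w : Fin r → F}
    (h : LinearIndependent F ![v, w]) :
    ∃ b : Module.Basis (Fin r) F (Fin r → F),
      b ⟨0, by omega⟩ = v ∧ b ⟨1, by omega⟩ = w := by
  classical
  have hvw : v ≠ w := by
    intro hvw
    have h01 : (0 : Fin 2) = 1 := h.injective (by simp [hvw])
    simp at h01
  have hs : LinearIndepOn F id (Set.range ![v, w]) :=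
    (linearIndepOn_id_range_iff h.injective).mpr h
  let B := Module.Basis.extend hs
  haveI : Fintype (hs.extend (Set.subset_univ _)) := FiniteDimensional.fintypeBasisIndex B
  have hcard : Fintype.card (hs.extend (Set.subset_univ _)) = r := by
    have h1 := Module.finrank_eq_card_basis B
    rw [Module.finrank_fintype_fun_eq_card, Fintype.card_fin] at h1; exact h1.symm
  have hvt : v ∈ hs.extend (Set.subset_univ _) := hs.subset_extend _ ⟨0, rfl⟩
  have hwt : w ∈ hs.extend (Set.subset_univ _) := hs.subset_extend _ ⟨1, rfl⟩
  let e0 : Fin r ≃ (hs.extend (Set.subset_univ _)) :=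
    Fintype.equivOfCardEq (by rw [Fintype.card_fin, hcard])
  let i0 : Fin r := ⟨0, by omega⟩
  let i1 : Fin r := ⟨1, by omega⟩
  let e1 : Fin r ≃ (hs.extend (Set.subset_univ _)) :=
    (Equiv.swap i0 (e0.symm ⟨v, hvt⟩)).trans e0
  have he1 : e1 i0 = ⟨v, hvt⟩ := by simp [e1, Equiv.swap_apply_left]
  let bidx : Fin r := e1.symm ⟨w, hwt⟩
  have hbidx : bidx ≠ i0 := by
    intro hb
    apply hvw
    have : e1 bidx = ⟨w, hwt⟩ := e1.apply_symm_apply _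
    rw [hb, he1] at this
    exact congrArg Subtype.val this
  let e : Fin r ≃ (hs.extend (Set.subset_univ _)) := (Equiv.swap i1 bidx).trans e1
  have he10 : i0 ≠ i1 := by simp [i0, i1, Fin.ext_iff]
  have hei1 : e i1 = ⟨w, hwt⟩ := by simp [e, bidx, Equiv.swap_apply_left]
  have hei0 : e i0 = ⟨v, hvt⟩ := by
    have : Equiv.swap i1 bidx i0 = i0 := Equiv.swap_apply_of_ne_of_ne he10 (Ne.symm hbidx)
    simp only [e, Equiv.trans_apply, this, he1]
  refine ⟨B.reindex e.symm, ?_, ?_⟩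
  · rw [Module.Basis.reindex_apply, Equiv.symm_symm, hei0]
    exact Module.Basis.extend_apply_self hs _
  · rw [Module.Basis.reindex_apply, Equiv.symm_symm, hei1]
    exact Module.Basis.extend_apply_self hs _


private lemma exists_gl_basis (b : Module.Basis (Fin r) F (Fin r → F)) :
    ∃ g : GL (Fin r) F, ∀ j, (↑g : Matrix (Fin r) (Fin r) F).mulVec (Pi.single j 1) = b j := by
  classical
  haveI := (Pi.basisFun F (Fin r)).invertibleToMatrix b
  refine ⟨unitOfInvertible ((Pi.basisFun F (Fin r)).toMatrix b), fun j => ?_⟩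
  funext i
  have hc : ((unitOfInvertible ((Pi.basisFun F (Fin r)).toMatrix b) : GL (Fin r) F) :
      Matrix (Fin r) (Fin r) F) = (Pi.basisFun F (Fin r)).toMatrix b := rfl
  rw [hc, Matrix.mulVec_single_one]
  simp [Matrix.transpose_apply, Module.Basis.toMatrix_apply]

private lemma gl_inv_mulVec (g : GL (Fin r) F) (v : Fin r → F) :
    (↑g⁻¹ : Matrix (Fin r) (Fin r) F).mulVec ((↑g : Matrix (Fin r) (Fin r) F).mulVec v) = v := by
  rw [Matrix.mulVec_mulVec, ← Matrix.GeneralLinearGroup.coe_mul, inv_mul_cancel,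
    Matrix.GeneralLinearGroup.coe_one, Matrix.one_mulVec]

private lemma gl_mulVec_inj (g : GL (Fin r) F) {v w : Fin r → F}
    (h : (↑g : Matrix (Fin r) (Fin r) F).mulVec v = (↑g : Matrix (Fin r) (Fin r) F).mulVec w) :
    v = w := by
  have := congrArg ((↑g⁻¹ : Matrix (Fin r) (Fin r) F).mulVec) h
  rwa [gl_inv_mulVec, gl_inv_mulVec] at this

private lemma gl_mulVec_ne_zero (g : GL (Fin r) F) {v : Fin r → F} (hv : v ≠ 0) :
    (↑g : Matrix (Fin r) (Fin r) F).mulVec v ≠ 0 := by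
  intro h
  apply hv
  apply gl_mulVec_inj g
  rw [h, Matrix.mulVec_zero]

/-- transitivity on nonzero vectors -/
private lemma exists_gl_trans (hr : 0 < r) {v w : Fin r → F} (hv : v ≠ 0) (hw : w ≠ 0) :
    ∃ g : GL (Fin r) F, (↑g : Matrix (Fin r) (Fin r) F).mulVec v = w := by
  obtain ⟨b1, hb1⟩ := exists_basis_single hr hv
  obtain ⟨b2, hb2⟩ := exists_basis_single hr hw
  obtain ⟨g1, hg1⟩ := exists_gl_basis b1
  obtain ⟨g2, hg2⟩ := exists_gl_basis b2
  refine ⟨g2 * g1⁻¹, ?_⟩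
  have h1 : (↑g1⁻¹ : Matrix (Fin r) (Fin r) F).mulVec v = Pi.single ⟨0, hr⟩ 1 := by
    rw [show v = (↑g1 : Matrix (Fin r) (Fin r) F).mulVec (Pi.single ⟨0, hr⟩ 1) by
      rw [hg1, hb1], gl_inv_mulVec]
  rw [Matrix.GeneralLinearGroup.coe_mul, ← Matrix.mulVec_mulVec, h1, hg2, hb2]

/-- transitivity on linearly independent pairs -/
private lemma exists_gl_trans_pair (hr : 2 ≤ r) {v w v' w' : Fin r → F}
    (h : LinearIndependent F ![v, w]) (h' : LinearIndependent F ![v', w']) :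
    ∃ g : GL (Fin r) F, (↑g : Matrix (Fin r) (Fin r) F).mulVec v = v' ∧
      (↑g : Matrix (Fin r) (Fin r) F).mulVec w = w' := by
  obtain ⟨b1, hb10, hb11⟩ := exists_basis_pair hr h
  obtain ⟨b2, hb20, hb21⟩ := exists_basis_pair hr h'
  obtain ⟨g1, hg1⟩ := exists_gl_basis b1
  obtain ⟨g2, hg2⟩ := exists_gl_basis b2
  refine ⟨g2 * g1⁻¹, ?_, ?_⟩
  · have h1 : (↑g1⁻¹ : Matrix (Fin r) (Fin r) F).mulVec v = Pi.single ⟨0, by omega⟩ 1 := by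
      rw [show v = (↑g1 : Matrix (Fin r) (Fin r) F).mulVec (Pi.single ⟨0, by omega⟩ 1) by
        rw [hg1, hb10], gl_inv_mulVec]
    rw [Matrix.GeneralLinearGroup.coe_mul, ← Matrix.mulVec_mulVec, h1, hg2, hb20]
  · have h1 : (↑g1⁻¹ : Matrix (Fin r) (Fin r) F).mulVec w = Pi.single ⟨1, by omega⟩ 1 := by
      rw [show w = (↑g1 : Matrix (Fin r) (Fin r) F).mulVec (Pi.single ⟨1, by omega⟩ 1) by
        rw [hg1, hb11], gl_inv_mulVec]
    rw [Matrix.GeneralLinearGroup.coe_mul, ← Matrix.mulVec_mulVec, h1, hg2, hb21]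


private lemma card_filter_equiv {G : Type*} [Fintype G] [DecidableEq G]
    (σ : Equiv.Perm G) (p q : G → Prop) [DecidablePred p] [DecidablePred q]
    (h : ∀ g, p g ↔ q (σ g)) :
    (Finset.univ.filter p).card = (Finset.univ.filter q).card := by
  apply Finset.card_bij' (fun g _ => σ g) (fun g _ => σ.symm g)
  · intro a ha
    simp only [Finset.mem_filter, Finset.mem_univ, true_and] at ha ⊢
    exact (h a).1 ha
  · intro a ha
    simp only [Finset.mem_filter, Finset.mem_univ, true_and] at ha ⊢
    rw [h _, σ.apply_symm_apply]; exact ha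
  · intros; simp
  · intros; simp

/-- orbit-stabilizer for the action on nonzero vectors -/
private lemma stab_card_mul (hr : 0 < r) {v : Fin r → F} (hv : v ≠ 0)
    [DecidableEq F] :
    (Finset.univ.filter fun g : GL (Fin r) F =>
        (↑g : Matrix (Fin r) (Fin r) F).mulVec v = v).card
      * (Fintype.card F ^ r - 1) = Fintype.card (GL (Fin r) F) := by
  classical
  have hpart := Finset.card_eq_sum_card_fiberwise
    (f := fun g : GL (Fin r) F => (↑g : Matrix (Fin r) (Fin r) F).mulVec v)
    (s := Finset.univ) (t := Finset.univ) (fun x _ => Finset.mem_univ _)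
  rw [Finset.card_univ] at hpart
  have hrestrict : ∑ w ∈ Finset.univ.filter (fun w : Fin r → F => w ≠ 0),
      (Finset.univ.filter fun g : GL (Fin r) F =>
        (↑g : Matrix (Fin r) (Fin r) F).mulVec v = w).card
      = ∑ w : Fin r → F, (Finset.univ.filter fun g : GL (Fin r) F =>
        (↑g : Matrix (Fin r) (Fin r) F).mulVec v = w).card := by
    apply Finset.sum_filter_of_ne
    intro w _ hcard
    obtain ⟨g, hg⟩ := Finset.card_pos.mp (Nat.pos_of_ne_zero hcard)
    simp only [Finset.mem_filter] at hg
    rw [← hg.2]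
    exact gl_mulVec_ne_zero g hv
  have hconst : ∀ w ∈ Finset.univ.filter (fun w : Fin r → F => w ≠ 0),
      (Finset.univ.filter fun g : GL (Fin r) F =>
        (↑g : Matrix (Fin r) (Fin r) F).mulVec v = w).card
      = (Finset.univ.filter fun g : GL (Fin r) F =>
        (↑g : Matrix (Fin r) (Fin r) F).mulVec v = v).card := by
    intro w hw
    simp only [Finset.mem_filter] at hw
    obtain ⟨g0, hg0⟩ := exists_gl_trans hr hv hw.2
    apply card_filter_equiv (Equiv.mulLeft g0⁻¹)
    intro g
    constructor
    · intro hgv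
      show (↑(g0⁻¹ * g) : Matrix (Fin r) (Fin r) F).mulVec v = v
      rw [Matrix.GeneralLinearGroup.coe_mul, ← Matrix.mulVec_mulVec, hgv, ← hg0, gl_inv_mulVec]
    · intro hgv
      simp only [Equiv.coe_mulLeft] at hgv
      have : (↑(g0 * (g0⁻¹ * g)) : Matrix (Fin r) (Fin r) F).mulVec v = w := by
        rw [Matrix.GeneralLinearGroup.coe_mul, ← Matrix.mulVec_mulVec, hgv, hg0]
      rwa [mul_inv_cancel_left] at this
  rw [hpart, ← hrestrict, Finset.sum_congr rfl hconst, Finset.sum_const, smul_eq_mul,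
    mul_comm]
  congr 1
  rw [Finset.filter_ne', Finset.card_erase_of_mem (Finset.mem_univ _), Finset.card_univ]
  congr 1
  rw [Fintype.card_fun, Fintype.card_fin]


private lemma pair_eta (s : Fin 2 → (Fin r → F)) : ![s 0, s 1] = s := by
  funext i
  fin_cases i <;> simp

private lemma card_li_pairs (hr : 2 ≤ r) [DecidableEq F]
    [DecidablePred fun ab : (Fin r → F) × (Fin r → F) => LinearIndependent F ![ab.1, ab.2]] :
    (Finset.univ.filter fun ab : (Fin r → F) × (Fin r → F) =>
        LinearIndependent F ![ab.1, ab.2]).card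
      = (Fintype.card F ^ r - 1) * (Fintype.card F ^ r - Fintype.card F) := by
  classical
  have hcard := card_linearIndependent (K := F) (V := Fin r → F) (k := 2)
    (by rw [Module.finrank_fintype_fun_eq_card, Fintype.card_fin]; exact hr)
  have eqv : {s : Fin 2 → (Fin r → F) // LinearIndependent F s}
      ≃ {ab : (Fin r → F) × (Fin r → F) // LinearIndependent F ![ab.1, ab.2]} :=
    Equiv.subtypeEquiv (piFinTwoEquiv fun _ => Fin r → F)
      (fun s => by simp only [piFinTwoEquiv, Equiv.coe_fn_mk]; rw [pair_eta s])
  have he : Nat.card {s : Fin 2 → (Fin r → F) // LinearIndependent F s}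
      = (Finset.univ.filter fun ab : (Fin r → F) × (Fin r → F) =>
          LinearIndependent F ![ab.1, ab.2]).card := by
    rw [Nat.card_congr eqv, Nat.card_eq_fintype_card, Fintype.card_subtype]
  rw [he.symm, hcard, Fin.prod_univ_two, Module.finrank_fintype_fun_eq_card, Fintype.card_fin]
  norm_num

/-- orbit-stabilizer for the action on linearly independent pairs -/
private lemma stab2_card_mul (hr : 2 ≤ r) {v w : Fin r → F}
    (h : LinearIndependent F ![v, w]) [DecidableEq F] :
    (Finset.univ.filter fun g : GL (Fin r) F =>
        (↑g : Matrix (Fin r) (Fin r) F).mulVec v = v ∧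
        (↑g : Matrix (Fin r) (Fin r) F).mulVec w = w).card
      * ((Fintype.card F ^ r - 1) * (Fintype.card F ^ r - Fintype.card F))
      = Fintype.card (GL (Fin r) F) := by
  classical
  have hpart := Finset.card_eq_sum_card_fiberwise
    (f := fun g : GL (Fin r) F => ((↑g : Matrix (Fin r) (Fin r) F).mulVec v,
      (↑g : Matrix (Fin r) (Fin r) F).mulVec w))
    (s := Finset.univ) (t := Finset.univ) (fun x _ => Finset.mem_univ _)
  rw [Finset.card_univ] at hpart
  have hli_map : ∀ (g : GL (Fin r) F),
      LinearIndependent F ![(↑g : Matrix (Fin r) (Fin r) F).mulVec v,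
        (↑g : Matrix (Fin r) (Fin r) F).mulVec w] := by
    intro g
    have hker : LinearMap.ker (Matrix.mulVecLin (↑g : Matrix (Fin r) (Fin r) F)) = ⊥ := by
      rw [LinearMap.ker_eq_bot]
      intro a b hab
      exact gl_mulVec_inj g hab
    have := h.map' (Matrix.mulVecLin (↑g : Matrix (Fin r) (Fin r) F)) hker
    convert this using 1
    funext i
    fin_cases i <;> simp [Matrix.mulVecLin_apply]
    all_goals rfl
  have hrestrict : ∑ ab ∈ Finset.univ.filter
      (fun ab : (Fin r → F) × (Fin r → F) => LinearIndependent F ![ab.1, ab.2]),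
      (Finset.univ.filter fun g : GL (Fin r) F =>
        ((↑g : Matrix (Fin r) (Fin r) F).mulVec v,
          (↑g : Matrix (Fin r) (Fin r) F).mulVec w) = ab).card
      = ∑ ab : (Fin r → F) × (Fin r → F),
        (Finset.univ.filter fun g : GL (Fin r) F =>
          ((↑g : Matrix (Fin r) (Fin r) F).mulVec v,
            (↑g : Matrix (Fin r) (Fin r) F).mulVec w) = ab).card := by
    apply Finset.sum_filter_of_ne
    intro ab _ hcard
    obtain ⟨g, hg⟩ := Finset.card_pos.mp (Nat.pos_of_ne_zero hcard)
    simp only [Finset.mem_filter] at hg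
    rw [← hg.2]
    exact hli_map g
  have hconst : ∀ ab ∈ Finset.univ.filter
      (fun ab : (Fin r → F) × (Fin r → F) => LinearIndependent F ![ab.1, ab.2]),
      (Finset.univ.filter fun g : GL (Fin r) F =>
        ((↑g : Matrix (Fin r) (Fin r) F).mulVec v,
          (↑g : Matrix (Fin r) (Fin r) F).mulVec w) = ab).card
      = (Finset.univ.filter fun g : GL (Fin r) F =>
          (↑g : Matrix (Fin r) (Fin r) F).mulVec v = v ∧
          (↑g : Matrix (Fin r) (Fin r) F).mulVec w = w).card := by
    intro ab hab
    simp only [Finset.mem_filter] at hab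
    obtain ⟨g0, hg0v, hg0w⟩ := exists_gl_trans_pair hr h hab.2
    symm
    apply card_filter_equiv (Equiv.mulLeft g0)
    intro g
    simp only [Equiv.coe_mulLeft]
    constructor
    · rintro ⟨h1, h2⟩
      rw [Prod.mk.injEq]
      constructor <;> rw [Matrix.GeneralLinearGroup.coe_mul, ← Matrix.mulVec_mulVec]
      · rw [h1, hg0v]
      · rw [h2, hg0w]
    · rintro hpq
      rw [Prod.mk.injEq] at hpq
      obtain ⟨h1, h2⟩ := hpq
      rw [Matrix.GeneralLinearGroup.coe_mul, ← Matrix.mulVec_mulVec] at h1 h2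
      constructor
      · apply gl_mulVec_inj g0; rw [h1, hg0v]
      · apply gl_mulVec_inj g0; rw [h2, hg0w]
  rw [hpart, ← hrestrict, Finset.sum_congr rfl hconst, Finset.sum_const, smul_eq_mul,
    mul_comm, card_li_pairs hr]

private lemma card_ne_zero_vec [DecidableEq F] : (Finset.univ.filter
    (fun v : Fin r → F => v ≠ 0)).card = Fintype.card F ^ r - 1 := by
  classical
  rw [Finset.filter_ne', Finset.card_erase_of_mem (Finset.mem_univ _), Finset.card_univ,
    Fintype.card_fun, Fintype.card_fin]

private lemma n_pos (hr : 0 < r) : 0 < Fintype.card F ^ r - 1 := by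
  have h2 : 2 ≤ Fintype.card F := Fintype.one_lt_card
  have : 2 ≤ Fintype.card F ^ r := le_trans h2 (Nat.le_self_pow (by omega) _)
  omega

private lemma sum_fix_eq (hr : 0 < r) [DecidableEq F] :
    ∑ g : GL (Fin r) F, (Finset.univ.filter fun v : Fin r → F =>
        v ≠ 0 ∧ (↑g : Matrix (Fin r) (Fin r) F).mulVec v = v).card
      = Fintype.card (GL (Fin r) F) := by
  classical
  have hswap : ∑ g : GL (Fin r) F, (Finset.univ.filter fun v : Fin r → F =>
      v ≠ 0 ∧ (↑g : Matrix (Fin r) (Fin r) F).mulVec v = v).card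
      = ∑ v : Fin r → F, (Finset.univ.filter fun g : GL (Fin r) F =>
        v ≠ 0 ∧ (↑g : Matrix (Fin r) (Fin r) F).mulVec v = v).card := by
    simp only [Finset.card_filter]
    exact Finset.sum_comm
  rw [hswap]
  have hres : ∑ v ∈ Finset.univ.filter (fun v : Fin r → F => v ≠ 0),
      (Finset.univ.filter fun g : GL (Fin r) F =>
        v ≠ 0 ∧ (↑g : Matrix (Fin r) (Fin r) F).mulVec v = v).card
      = ∑ v : Fin r → F, (Finset.univ.filter fun g : GL (Fin r) F =>
        v ≠ 0 ∧ (↑g : Matrix (Fin r) (Fin r) F).mulVec v = v).card := by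
    apply Finset.sum_filter_of_ne
    intro v _ hc
    obtain ⟨g, hg⟩ := Finset.card_pos.mp (Nat.pos_of_ne_zero hc)
    exact (Finset.mem_filter.mp hg).2.1
  rw [← hres]
  apply Nat.eq_of_mul_eq_mul_right (n_pos (F := F) hr)
  rw [Finset.sum_mul]
  have hterm : ∀ v ∈ Finset.univ.filter (fun v : Fin r → F => v ≠ 0),
      (Finset.univ.filter fun g : GL (Fin r) F =>
        v ≠ 0 ∧ (↑g : Matrix (Fin r) (Fin r) F).mulVec v = v).card * (Fintype.card F ^ r - 1)
      = Fintype.card (GL (Fin r) F) := by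
    intro v hv
    have hv0 : v ≠ 0 := (Finset.mem_filter.mp hv).2
    have hfeq : (Finset.univ.filter fun g : GL (Fin r) F =>
        v ≠ 0 ∧ (↑g : Matrix (Fin r) (Fin r) F).mulVec v = v)
        = (Finset.univ.filter fun g : GL (Fin r) F =>
          (↑g : Matrix (Fin r) (Fin r) F).mulVec v = v) :=
      Finset.filter_congr (fun g _ => by simp [hv0])
    rw [hfeq]
    exact stab_card_mul hr hv0
  rw [Finset.sum_congr rfl hterm, Finset.sum_const, smul_eq_mul, card_ne_zero_vec, mul_comm]

private lemma inner_sum_bound (hr : 0 < r) [DecidableEq F] {v : Fin r → F} (hv : v ≠ 0) :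
    (∑ w : Fin r → F, (Finset.univ.filter fun g : GL (Fin r) F =>
        (v ≠ 0 ∧ (↑g : Matrix (Fin r) (Fin r) F).mulVec v = v) ∧
        (w ≠ 0 ∧ (↑g : Matrix (Fin r) (Fin r) F).mulVec w = w)).card)
      * (Fintype.card F ^ r - 1)
      ≤ (Fintype.card F + 1) * Fintype.card (GL (Fin r) F) := by
  classical
  rw [← Finset.sum_filter_add_sum_filter_not Finset.univ
    (fun w : Fin r → F => ∃ c : F, w = c • v), add_mul]
  have hD : (Finset.univ.filter (fun w : Fin r → F => ∃ c : F, w = c • v)).card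
      = Fintype.card F := by
    have himg : Finset.univ.filter (fun w : Fin r → F => ∃ c : F, w = c • v)
        = Finset.image (fun c : F => c • v) Finset.univ := by
      ext w
      simp [eq_comm]
    rw [himg, Finset.card_image_of_injective _ (smul_left_injective F hv), Finset.card_univ]
  have hDsum : ∑ w ∈ Finset.univ.filter (fun w : Fin r → F => ∃ c : F, w = c • v),
      (Finset.univ.filter fun g : GL (Fin r) F =>
        (v ≠ 0 ∧ (↑g : Matrix (Fin r) (Fin r) F).mulVec v = v) ∧
        (w ≠ 0 ∧ (↑g : Matrix (Fin r) (Fin r) F).mulVec w = w)).card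
      ≤ Fintype.card F * (Finset.univ.filter fun g : GL (Fin r) F =>
          (↑g : Matrix (Fin r) (Fin r) F).mulVec v = v).card := by
    have hb := Finset.sum_le_card_nsmul
      (Finset.univ.filter (fun w : Fin r → F => ∃ c : F, w = c • v))
      (fun w => (Finset.univ.filter fun g : GL (Fin r) F =>
        (v ≠ 0 ∧ (↑g : Matrix (Fin r) (Fin r) F).mulVec v = v) ∧
        (w ≠ 0 ∧ (↑g : Matrix (Fin r) (Fin r) F).mulVec w = w)).card)
      ((Finset.univ.filter fun g : GL (Fin r) F =>
          (↑g : Matrix (Fin r) (Fin r) F).mulVec v = v).card)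
      (fun w _ => Finset.card_le_card
        (Finset.monotone_filter_right _ (fun g _ hg => hg.1.2)))
    rwa [smul_eq_mul, hD] at hb
  have hnDsum : (∑ w ∈ Finset.univ.filter (fun w : Fin r → F => ¬∃ c : F, w = c • v),
      (Finset.univ.filter fun g : GL (Fin r) F =>
        (v ≠ 0 ∧ (↑g : Matrix (Fin r) (Fin r) F).mulVec v = v) ∧
        (w ≠ 0 ∧ (↑g : Matrix (Fin r) (Fin r) F).mulVec w = w)).card)
      * (Fintype.card F ^ r - 1) ≤ Fintype.card (GL (Fin r) F) := by
    rcases Finset.eq_empty_or_nonempty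
      (Finset.univ.filter (fun w : Fin r → F => ¬∃ c : F, w = c • v)) with he | hne
    · rw [he, Finset.sum_empty, Nat.zero_mul]
      exact Nat.zero_le _
    · have hli : ∀ w ∈ Finset.univ.filter (fun w : Fin r → F => ¬∃ c : F, w = c • v),
          LinearIndependent F ![w, v] := by
        intro w hw
        have hw' := (Finset.mem_filter.mp hw).2
        rw [linearIndependent_fin2]
        refine ⟨by simpa using hv, fun a ha => hw' ⟨a, ?_⟩⟩
        simpa using ha.symm
      obtain ⟨w0, hw0⟩ := hne
      have hr2 : 2 ≤ r := by
        have h2 := (hli w0 hw0).fintype_card_le_finrank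
        rwa [Fintype.card_fin, Module.finrank_fintype_fun_eq_card, Fintype.card_fin] at h2
      have hq2 : 2 ≤ Fintype.card F := Fintype.one_lt_card
      have hnq : 0 < Fintype.card F ^ r - Fintype.card F := by
        have : Fintype.card F ^ 1 < Fintype.card F ^ r :=
          Nat.pow_lt_pow_right (by omega) (by omega)
        rw [pow_one] at this
        omega
      have hcard_nD : (Finset.univ.filter
          (fun w : Fin r → F => ¬∃ c : F, w = c • v)).card
          = Fintype.card F ^ r - Fintype.card F := by
        rw [Finset.filter_not, Finset.card_sdiff_of_subset (Finset.filter_subset _ _),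
          Finset.card_univ, Fintype.card_fun, Fintype.card_fin, hD]
      apply Nat.le_of_mul_le_mul_right ?_ hnq
      apply le_of_eq
      calc (∑ w ∈ Finset.univ.filter (fun w : Fin r → F => ¬∃ c : F, w = c • v),
            (Finset.univ.filter fun g : GL (Fin r) F =>
              (v ≠ 0 ∧ (↑g : Matrix (Fin r) (Fin r) F).mulVec v = v) ∧
              (w ≠ 0 ∧ (↑g : Matrix (Fin r) (Fin r) F).mulVec w = w)).card)
            * (Fintype.card F ^ r - 1) * (Fintype.card F ^ r - Fintype.card F)
          = ∑ w ∈ Finset.univ.filter (fun w : Fin r → F => ¬∃ c : F, w = c • v),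
            ((Finset.univ.filter fun g : GL (Fin r) F =>
              (v ≠ 0 ∧ (↑g : Matrix (Fin r) (Fin r) F).mulVec v = v) ∧
              (w ≠ 0 ∧ (↑g : Matrix (Fin r) (Fin r) F).mulVec w = w)).card
              * ((Fintype.card F ^ r - 1) * (Fintype.card F ^ r - Fintype.card F))) := by
            rw [mul_assoc, Finset.sum_mul]
        _ = ∑ w ∈ Finset.univ.filter (fun w : Fin r → F => ¬∃ c : F, w = c • v),
            Fintype.card (GL (Fin r) F) := by
            refine Finset.sum_congr rfl fun w hw => ?_
            have hw0' : w ≠ 0 := by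
              intro h0
              exact (Finset.mem_filter.mp hw).2 ⟨0, by simp [h0]⟩
            have hfeq : (Finset.univ.filter fun g : GL (Fin r) F =>
                (v ≠ 0 ∧ (↑g : Matrix (Fin r) (Fin r) F).mulVec v = v) ∧
                (w ≠ 0 ∧ (↑g : Matrix (Fin r) (Fin r) F).mulVec w = w))
                = (Finset.univ.filter fun g : GL (Fin r) F =>
                  (↑g : Matrix (Fin r) (Fin r) F).mulVec w = w ∧
                  (↑g : Matrix (Fin r) (Fin r) F).mulVec v = v) :=
              Finset.filter_congr (fun g _ => by simp [hv, hw0']; tauto)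
            rw [hfeq]
            exact stab2_card_mul hr2 (hli w hw)
        _ = (Fintype.card F ^ r - Fintype.card F) * Fintype.card (GL (Fin r) F) := by
            rw [Finset.sum_const, smul_eq_mul, hcard_nD]
        _ = Fintype.card (GL (Fin r) F) * (Fintype.card F ^ r - Fintype.card F) := by
            rw [mul_comm]
  calc (∑ w ∈ Finset.univ.filter (fun w : Fin r → F => ∃ c : F, w = c • v),
        (Finset.univ.filter fun g : GL (Fin r) F =>
          (v ≠ 0 ∧ (↑g : Matrix (Fin r) (Fin r) F).mulVec v = v) ∧
          (w ≠ 0 ∧ (↑g : Matrix (Fin r) (Fin r) F).mulVec w = w)).card)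
        * (Fintype.card F ^ r - 1)
      + (∑ w ∈ Finset.univ.filter (fun w : Fin r → F => ¬∃ c : F, w = c • v),
        (Finset.univ.filter fun g : GL (Fin r) F =>
          (v ≠ 0 ∧ (↑g : Matrix (Fin r) (Fin r) F).mulVec v = v) ∧
          (w ≠ 0 ∧ (↑g : Matrix (Fin r) (Fin r) F).mulVec w = w)).card)
        * (Fintype.card F ^ r - 1)
      ≤ Fintype.card F * (Finset.univ.filter fun g : GL (Fin r) F =>
          (↑g : Matrix (Fin r) (Fin r) F).mulVec v = v).card * (Fintype.card F ^ r - 1)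
        + Fintype.card (GL (Fin r) F) :=
        add_le_add (Nat.mul_le_mul_right _ hDsum) hnDsum
    _ = Fintype.card F * Fintype.card (GL (Fin r) F) + Fintype.card (GL (Fin r) F) := by
        rw [mul_assoc, stab_card_mul hr hv]
    _ = (Fintype.card F + 1) * Fintype.card (GL (Fin r) F) := by ring

private lemma sum_fix_sq_le (hr : 0 < r) [DecidableEq F] :
    ∑ g : GL (Fin r) F, ((Finset.univ.filter fun v : Fin r → F =>
        v ≠ 0 ∧ (↑g : Matrix (Fin r) (Fin r) F).mulVec v = v).card) ^ 2
      ≤ (Fintype.card F + 1) * Fintype.card (GL (Fin r) F) := by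
  classical
  have key : ∑ g : GL (Fin r) F, ((Finset.univ.filter fun v : Fin r → F =>
        v ≠ 0 ∧ (↑g : Matrix (Fin r) (Fin r) F).mulVec v = v).card) ^ 2
      = ∑ v : Fin r → F, ∑ w : Fin r → F,
        (Finset.univ.filter fun g : GL (Fin r) F =>
          (v ≠ 0 ∧ (↑g : Matrix (Fin r) (Fin r) F).mulVec v = v) ∧
          (w ≠ 0 ∧ (↑g : Matrix (Fin r) (Fin r) F).mulVec w = w)).card := by
    have h1 : ∀ g : GL (Fin r) F, ((Finset.univ.filter fun v : Fin r → F =>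
        v ≠ 0 ∧ (↑g : Matrix (Fin r) (Fin r) F).mulVec v = v).card) ^ 2
        = ∑ v : Fin r → F, ∑ w : Fin r → F,
          if (v ≠ 0 ∧ (↑g : Matrix (Fin r) (Fin r) F).mulVec v = v) ∧
             (w ≠ 0 ∧ (↑g : Matrix (Fin r) (Fin r) F).mulVec w = w) then 1 else 0 := by
      intro g
      rw [sq, Finset.card_filter, Finset.sum_mul_sum]
      refine Finset.sum_congr rfl fun v _ => Finset.sum_congr rfl fun w _ => ?_
      split_ifs with h1 h2 h3 <;> simp_all
    simp only [h1]
    simp only [Finset.card_filter]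
    have e1 : ∑ g : GL (Fin r) F, ∑ v : Fin r → F, ∑ w : Fin r → F,
        (if (v ≠ 0 ∧ (↑g : Matrix (Fin r) (Fin r) F).mulVec v = v) ∧
          (w ≠ 0 ∧ (↑g : Matrix (Fin r) (Fin r) F).mulVec w = w) then 1 else 0 : ℕ)
        = ∑ v : Fin r → F, ∑ g : GL (Fin r) F, ∑ w : Fin r → F,
        (if (v ≠ 0 ∧ (↑g : Matrix (Fin r) (Fin r) F).mulVec v = v) ∧
          (w ≠ 0 ∧ (↑g : Matrix (Fin r) (Fin r) F).mulVec w = w) then 1 else 0 : ℕ) :=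
      Finset.sum_comm
    rw [e1]
    refine Finset.sum_congr rfl fun v _ => ?_
    exact Finset.sum_comm
  rw [key]
  refine Nat.le_of_mul_le_mul_right ?_ (n_pos (F := F) hr)
  have hres : ∑ v : Fin r → F, ∑ w : Fin r → F,
      (Finset.univ.filter fun g : GL (Fin r) F =>
        (v ≠ 0 ∧ (↑g : Matrix (Fin r) (Fin r) F).mulVec v = v) ∧
        (w ≠ 0 ∧ (↑g : Matrix (Fin r) (Fin r) F).mulVec w = w)).card
      = ∑ v ∈ Finset.univ.filter (fun v : Fin r → F => v ≠ 0),
        ∑ w : Fin r → F, (Finset.univ.filter fun g : GL (Fin r) F =>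
          (v ≠ 0 ∧ (↑g : Matrix (Fin r) (Fin r) F).mulVec v = v) ∧
          (w ≠ 0 ∧ (↑g : Matrix (Fin r) (Fin r) F).mulVec w = w)).card := by
    symm
    apply Finset.sum_filter_of_ne
    intro v _ hc
    obtain ⟨w, hw⟩ := Finset.exists_ne_zero_of_sum_ne_zero hc
    obtain ⟨g, hg⟩ := Finset.card_pos.mp (Nat.pos_of_ne_zero hw.2)
    exact (Finset.mem_filter.mp hg).2.1.1
  rw [hres, Finset.sum_mul]
  calc ∑ v ∈ Finset.univ.filter (fun v : Fin r → F => v ≠ 0),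
        (∑ w : Fin r → F, (Finset.univ.filter fun g : GL (Fin r) F =>
          (v ≠ 0 ∧ (↑g : Matrix (Fin r) (Fin r) F).mulVec v = v) ∧
          (w ≠ 0 ∧ (↑g : Matrix (Fin r) (Fin r) F).mulVec w = w)).card)
          * (Fintype.card F ^ r - 1)
      ≤ ∑ v ∈ Finset.univ.filter (fun v : Fin r → F => v ≠ 0),
        (Fintype.card F + 1) * Fintype.card (GL (Fin r) F) :=
      Finset.sum_le_sum fun v hv => inner_sum_bound hr (Finset.mem_filter.mp hv).2
    _ = (Fintype.card F ^ r - 1) * ((Fintype.card F + 1) * Fintype.card (GL (Fin r) F)) := by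
      rw [Finset.sum_const, smul_eq_mul, card_ne_zero_vec]
    _ = (Fintype.card F + 1) * Fintype.card (GL (Fin r) F) * (Fintype.card F ^ r - 1) := by
      ring

private lemma fix_card_ge [DecidableEq F] {g : GL (Fin r) F} {v : Fin r → F} (hv : v ≠ 0)
    (hgv : (↑g : Matrix (Fin r) (Fin r) F).mulVec v = v) :
    Fintype.card F - 1 ≤ (Finset.univ.filter fun w : Fin r → F =>
      w ≠ 0 ∧ (↑g : Matrix (Fin r) (Fin r) F).mulVec w = w).card := by
  classical
  have hcF : (Finset.univ.filter (fun c : F => c ≠ 0)).card = Fintype.card F - 1 := by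
    rw [Finset.filter_ne', Finset.card_erase_of_mem (Finset.mem_univ _), Finset.card_univ]
  rw [← hcF]
  apply Finset.card_le_card_of_injOn (fun c => c • v)
  · intro c hc
    have hc0 : c ≠ 0 := (Finset.mem_filter.mp hc).2
    refine Finset.mem_filter.mpr ⟨Finset.mem_univ _, smul_ne_zero hc0 hv, ?_⟩
    rw [Matrix.mulVec_smul, hgv]
  · exact (smul_left_injective F hv).injOn

end Aux


/-- For every positive integer `r` there exist positive real constants `c₁'`, `c₂'`,
depending only on `r`, such that for every finite field `F` of cardinality `q`,
`c₁'/q ≤ #S(r, F) / #GL(r, F) ≤ c₂'/q`, where `S(r, F)` is the set of invertible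
matrices fixing some nonzero vector. -/
theorem density_fixing_matrices_bounds (r : ℕ) (hr : 0 < r) :
    ∃ c₁' c₂' : ℝ, 0 < c₁' ∧ 0 < c₂' ∧
      ∀ (F : Type) [Field F] [Fintype F],
        c₁' / (Fintype.card F : ℝ) ≤
            (Nat.card {g : GL (Fin r) F |
                ∃ v : Fin r → F, v ≠ 0 ∧ Matrix.mulVec (↑g) v = v} : ℝ) /
              (Nat.card (GL (Fin r) F) : ℝ) ∧
          (Nat.card {g : GL (Fin r) F |
                ∃ v : Fin r → F, v ≠ 0 ∧ Matrix.mulVec (↑g) v = v} : ℝ) /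
              (Nat.card (GL (Fin r) F) : ℝ) ≤
            c₂' / (Fintype.card F : ℝ) := by
  refine ⟨1/2, 2, by norm_num, by norm_num, ?_⟩
  intro F _ _
  classical
  letI := Classical.decEq F
  have hq2 : 2 ≤ Fintype.card F := Fintype.one_lt_card
  have hGpos : 0 < Fintype.card (GL (Fin r) F) := Fintype.card_pos
  set N : ℕ := (Finset.univ.filter fun g : GL (Fin r) F =>
      ∃ v : Fin r → F, v ≠ 0 ∧ (↑g : Matrix (Fin r) (Fin r) F).mulVec v = v).card with hNdef
  have hNcard : Nat.card {g : GL (Fin r) F |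
      ∃ v : Fin r → F, v ≠ 0 ∧ Matrix.mulVec (↑g) v = v} = N := by
    rw [Nat.card_eq_fintype_card, hNdef]
    exact Fintype.card_of_subtype _ (fun g => by simp [Set.mem_setOf_eq])
  have hGcard : Nat.card (GL (Fin r) F) = Fintype.card (GL (Fin r) F) :=
    Nat.card_eq_fintype_card
  have hfix_sum : ∑ g ∈ Finset.univ.filter (fun g : GL (Fin r) F =>
        ∃ v : Fin r → F, v ≠ 0 ∧ (↑g : Matrix (Fin r) (Fin r) F).mulVec v = v),
      (Finset.univ.filter fun v : Fin r → F =>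
        v ≠ 0 ∧ (↑g : Matrix (Fin r) (Fin r) F).mulVec v = v).card
      = ∑ g : GL (Fin r) F, (Finset.univ.filter fun v : Fin r → F =>
        v ≠ 0 ∧ (↑g : Matrix (Fin r) (Fin r) F).mulVec v = v).card := by
    apply Finset.sum_filter_of_ne
    intro g _ hc
    obtain ⟨v, hv⟩ := Finset.card_pos.mp (Nat.pos_of_ne_zero hc)
    exact ⟨v, (Finset.mem_filter.mp hv).2⟩
  have hupper : N * (Fintype.card F - 1) ≤ Fintype.card (GL (Fin r) F) := by
    calc N * (Fintype.card F - 1)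
        = ∑ _g ∈ Finset.univ.filter (fun g : GL (Fin r) F =>
            ∃ v : Fin r → F, v ≠ 0 ∧ (↑g : Matrix (Fin r) (Fin r) F).mulVec v = v),
          (Fintype.card F - 1) := by rw [Finset.sum_const, smul_eq_mul]
      _ ≤ ∑ g ∈ Finset.univ.filter (fun g : GL (Fin r) F =>
            ∃ v : Fin r → F, v ≠ 0 ∧ (↑g : Matrix (Fin r) (Fin r) F).mulVec v = v),
          (Finset.univ.filter fun v : Fin r → F =>
            v ≠ 0 ∧ (↑g : Matrix (Fin r) (Fin r) F).mulVec v = v).card := by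
          refine Finset.sum_le_sum fun g hg => ?_
          obtain ⟨v, hv, hgv⟩ := (Finset.mem_filter.mp hg).2
          exact fix_card_ge hv hgv
      _ = ∑ g : GL (Fin r) F, (Finset.univ.filter fun v : Fin r → F =>
            v ≠ 0 ∧ (↑g : Matrix (Fin r) (Fin r) F).mulVec v = v).card := hfix_sum
      _ = Fintype.card (GL (Fin r) F) := sum_fix_eq hr
  have hGR : (0:ℝ) < (Fintype.card (GL (Fin r) F) : ℝ) := by exact_mod_cast hGpos
  have hNR : (0:ℝ) ≤ (N : ℝ) := Nat.cast_nonneg N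
  have hqR : (2:ℝ) ≤ (Fintype.card F : ℝ) := by exact_mod_cast hq2
  have hqR0 : (0:ℝ) < (Fintype.card F : ℝ) := by linarith
  have hCS : (Fintype.card (GL (Fin r) F) : ℝ)^2
      ≤ (N : ℝ) * (((Fintype.card F : ℝ) + 1) * (Fintype.card (GL (Fin r) F) : ℝ)) := by
    have h0 : ∑ g ∈ Finset.univ.filter (fun g : GL (Fin r) F =>
        ∃ v : Fin r → F, v ≠ 0 ∧ (↑g : Matrix (Fin r) (Fin r) F).mulVec v = v),
        (Finset.univ.filter fun v : Fin r → F =>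
          v ≠ 0 ∧ (↑g : Matrix (Fin r) (Fin r) F).mulVec v = v).card
        = Fintype.card (GL (Fin r) F) := hfix_sum.trans (sum_fix_eq hr)
    have h1 : (Fintype.card (GL (Fin r) F) : ℝ)
        = ∑ g ∈ Finset.univ.filter (fun g : GL (Fin r) F =>
          ∃ v : Fin r → F, v ≠ 0 ∧ (↑g : Matrix (Fin r) (Fin r) F).mulVec v = v),
          ((Finset.univ.filter fun v : Fin r → F =>
            v ≠ 0 ∧ (↑g : Matrix (Fin r) (Fin r) F).mulVec v = v).card : ℝ) := by
      rw [← Nat.cast_sum, h0]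
    have h2 := sq_sum_le_card_mul_sum_sq
      (s := Finset.univ.filter (fun g : GL (Fin r) F =>
        ∃ v : Fin r → F, v ≠ 0 ∧ (↑g : Matrix (Fin r) (Fin r) F).mulVec v = v))
      (f := fun g => ((Finset.univ.filter fun v : Fin r → F =>
        v ≠ 0 ∧ (↑g : Matrix (Fin r) (Fin r) F).mulVec v = v).card : ℝ))
    have h3 : ∑ g ∈ Finset.univ.filter (fun g : GL (Fin r) F =>
        ∃ v : Fin r → F, v ≠ 0 ∧ (↑g : Matrix (Fin r) (Fin r) F).mulVec v = v),
        ((Finset.univ.filter fun v : Fin r → F =>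
          v ≠ 0 ∧ (↑g : Matrix (Fin r) (Fin r) F).mulVec v = v).card : ℝ)^2
        ≤ ((Fintype.card F : ℝ) + 1) * (Fintype.card (GL (Fin r) F) : ℝ) := by
      have h4 : ∑ g ∈ Finset.univ.filter (fun g : GL (Fin r) F =>
          ∃ v : Fin r → F, v ≠ 0 ∧ (↑g : Matrix (Fin r) (Fin r) F).mulVec v = v),
          ((Finset.univ.filter fun v : Fin r → F =>
            v ≠ 0 ∧ (↑g : Matrix (Fin r) (Fin r) F).mulVec v = v).card : ℝ)^2
          ≤ ∑ g : GL (Fin r) F, ((Finset.univ.filter fun v : Fin r → F =>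
            v ≠ 0 ∧ (↑g : Matrix (Fin r) (Fin r) F).mulVec v = v).card : ℝ)^2 :=
        Finset.sum_le_sum_of_subset_of_nonneg (Finset.filter_subset _ _)
          (fun _ _ _ => by positivity)
      refine h4.trans ?_
      have h5 : ∑ g : GL (Fin r) F, ((Finset.univ.filter fun v : Fin r → F =>
          v ≠ 0 ∧ (↑g : Matrix (Fin r) (Fin r) F).mulVec v = v).card : ℝ)^2
          = ((∑ g : GL (Fin r) F, ((Finset.univ.filter fun v : Fin r → F =>
            v ≠ 0 ∧ (↑g : Matrix (Fin r) (Fin r) F).mulVec v = v).card)^2 : ℕ) : ℝ) := by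
        push_cast
        rfl
      rw [h5]
      have h6 := sum_fix_sq_le (F := F) hr
      calc ((∑ g : GL (Fin r) F, ((Finset.univ.filter fun v : Fin r → F =>
            v ≠ 0 ∧ (↑g : Matrix (Fin r) (Fin r) F).mulVec v = v).card)^2 : ℕ) : ℝ)
          ≤ (((Fintype.card F + 1) * Fintype.card (GL (Fin r) F) : ℕ) : ℝ) :=
            Nat.cast_le.mpr h6
        _ = ((Fintype.card F : ℝ) + 1) * (Fintype.card (GL (Fin r) F) : ℝ) := by push_cast; ring
    calc (Fintype.card (GL (Fin r) F) : ℝ)^2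
        = (∑ g ∈ Finset.univ.filter (fun g : GL (Fin r) F =>
          ∃ v : Fin r → F, v ≠ 0 ∧ (↑g : Matrix (Fin r) (Fin r) F).mulVec v = v),
          ((Finset.univ.filter fun v : Fin r → F =>
            v ≠ 0 ∧ (↑g : Matrix (Fin r) (Fin r) F).mulVec v = v).card : ℝ))^2 := by rw [← h1]
      _ ≤ (N : ℝ) * ∑ g ∈ Finset.univ.filter (fun g : GL (Fin r) F =>
          ∃ v : Fin r → F, v ≠ 0 ∧ (↑g : Matrix (Fin r) (Fin r) F).mulVec v = v),
          ((Finset.univ.filter fun v : Fin r → F =>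
            v ≠ 0 ∧ (↑g : Matrix (Fin r) (Fin r) F).mulVec v = v).card : ℝ)^2 := h2
      _ ≤ (N : ℝ) * (((Fintype.card F : ℝ) + 1) * (Fintype.card (GL (Fin r) F) : ℝ)) :=
          mul_le_mul_of_nonneg_left h3 hNR
  have hlowR : (Fintype.card (GL (Fin r) F) : ℝ) ≤ (N : ℝ) * ((Fintype.card F : ℝ) + 1) := by
    have h6 : (Fintype.card (GL (Fin r) F) : ℝ) * (Fintype.card (GL (Fin r) F) : ℝ)
        ≤ ((N : ℝ) * ((Fintype.card F : ℝ) + 1)) * (Fintype.card (GL (Fin r) F) : ℝ) := by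
      nlinarith [hCS]
    exact le_of_mul_le_mul_right h6 hGR
  have hupR : (N:ℝ) * ((Fintype.card F : ℝ) - 1) ≤ (Fintype.card (GL (Fin r) F) : ℝ) := by
    have hcast : ((N * (Fintype.card F - 1) : ℕ) : ℝ) = (N:ℝ) * ((Fintype.card F : ℝ) - 1) := by
      push_cast [Nat.cast_sub (by omega : 1 ≤ Fintype.card F)]
      ring
    rw [← hcast]
    exact_mod_cast hupper
  rw [hNcard, hGcard]
  constructor
  · rw [div_le_div_iff₀ hqR0 hGR]
    nlinarith [hlowR, hqR, hNR]
  · rw [div_le_div_iff₀ hGR hqR0]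
    nlinarith [hupR, hqR, hNR, hGR, mul_nonneg hNR (by linarith : (0:ℝ) ≤ (Fintype.card F : ℝ) - 2)]
end

section
/- For every positive integer r and every integer j with 1 ≤ j ≤ r there exists a positive real constant α, depending only on r and j, such that for every finite field F of cardinality q the number of matrices g ∈ GL(r,F) whose fixed space V^g = { v ∈ F^r : g·v = v } has F-dimension at least j is at most α·q^(r²−j²). -/
open Matrix

private lemma sumExtend_inl {K V ι : Type*} [DivisionRing K] [AddCommGroup V] [Module K V]
    {v : ι → V} (hs : LinearIndependent K v) (i : ι) : Module.Basis.sumExtend hs (Sum.inl i) = v i := by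
  simp [Module.Basis.sumExtend, Module.Basis.reindex_apply, Equiv.Set.sumDiffSubset, Module.Basis.extend_apply_self,
    Equiv.Set.union, Equiv.Set.union', Equiv.sumCongr_apply, Sum.map_inl, Equiv.ofInjective,
    Equiv.sumCongr, Sum.map, Equiv.ofLeftInverse]
  rfl

/-- The number of endomorphisms of `F^r` fixing a given linearly independent `j`-tuple. -/
private lemma card_fixing_le {F : Type} [Field F] [Fintype F] {r j : ℕ} (hjr : j ≤ r)
    (b : Fin j → (Fin r → F)) (hb : LinearIndependent F b) :
    Nat.card {f : (Fin r → F) →ₗ[F] (Fin r → F) // ∀ i, f (b i) = b i}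
      ≤ Fintype.card F ^ (r * (r - j)) := by
  classical
  haveI : Fintype (Module.Basis.sumExtendIndex hb) := Fintype.ofFinite _
  let B : Module.Basis (Fin j ⊕ (Module.Basis.sumExtendIndex hb)) F (Fin r → F) := Module.Basis.sumExtend hb
  have hcard : Fintype.card (Module.Basis.sumExtendIndex hb) = r - j := by
    have h1 : Module.finrank F (Fin r → F) = Fintype.card (Fin j ⊕ (Module.Basis.sumExtendIndex hb)) :=
      Module.finrank_eq_card_basis B
    have h2 : Module.finrank F (Fin r → F) = r := by
      simp [Module.finrank_fintype_fun_eq_card]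
    rw [h2, Fintype.card_sum, Fintype.card_fin] at h1
    omega
  let e : ((Fin j ⊕ (Module.Basis.sumExtendIndex hb)) → (Fin r → F)) ≃ₗ[F]
      ((Fin r → F) →ₗ[F] (Fin r → F)) := B.constr F
  have he : ∀ (u : (Fin j ⊕ (Module.Basis.sumExtendIndex hb)) → (Fin r → F)) (i : Fin j),
      (e u) (b i) = u (Sum.inl i) := by
    intro u i
    have hbi : b i = B (Sum.inl i) := (sumExtend_inl hb i).symm
    rw [hbi]
    exact B.constr_basis F u (Sum.inl i)
  have e1 : {u : (Fin j ⊕ (Module.Basis.sumExtendIndex hb)) → (Fin r → F) // ∀ i, u (Sum.inl i) = b i} ≃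
      {f : (Fin r → F) →ₗ[F] (Fin r → F) // ∀ i, f (b i) = b i} :=
    e.toEquiv.subtypeEquiv (fun u => by simp only [LinearEquiv.coe_toEquiv, he])
  have e2 : {u : (Fin j ⊕ (Module.Basis.sumExtendIndex hb)) → (Fin r → F) // ∀ i, u (Sum.inl i) = b i} ≃
      ((Module.Basis.sumExtendIndex hb) → (Fin r → F)) :=
    { toFun := fun u k => u.1 (Sum.inr k)
      invFun := fun w => ⟨Sum.elim b w, fun i => rfl⟩
      left_inv := by
        rintro ⟨u, hu⟩
        apply Subtype.ext
        funext x
        cases x with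
        | inl i => exact (hu i).symm
        | inr k => rfl
      right_inv := fun w => rfl }
  rw [← Nat.card_congr (e2.symm.trans e1)]
  have hfin : Nat.card ((Module.Basis.sumExtendIndex hb) → (Fin r → F))
      = Fintype.card F ^ (r * (r - j)) := by
    rw [Nat.card_eq_fintype_card, Fintype.card_fun, hcard]
    have hV : Fintype.card (Fin r → F) = Fintype.card F ^ r := by
      simp [Fintype.card_fun]
    rw [hV, ← pow_mul]
  exact hfin.le

/-- For every positive integer `r` and every `j` with `1 ≤ j ≤ r` there exists a positive
real constant `α`, depending only on `r` and `j`, such that for every finite field `F` of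
cardinality `q` the number of `g ∈ GL(r, F)` whose fixed space
`V^g = {v : g • v = v}` has dimension at least `j` is at most `α * q ^ (r² - j²)`. -/
theorem card_large_fixed_space_le (r j : ℕ) (hj : 1 ≤ j) (hjr : j ≤ r) :
    ∃ α : ℝ, 0 < α ∧
      ∀ (F : Type) [Field F] [Fintype F],
        (Nat.card {g : GL (Fin r) F |
            j ≤ Module.finrank F
              (LinearMap.ker
                (Matrix.toLin' (↑g : Matrix (Fin r) (Fin r) F) - LinearMap.id))} : ℝ) ≤
          α * (Fintype.card F : ℝ) ^ (r ^ 2 - j ^ 2) := by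
  classical
  refine ⟨(2 : ℝ) ^ j, by positivity, ?_⟩
  intro F _ _
  have hq2 : 2 ≤ Fintype.card F := Fintype.one_lt_card
  haveI : Finite ((Fin r → F) →ₗ[F] (Fin r → F)) :=
    Finite.of_injective _ (DFunLike.coe_injective)
  set St := {g : GL (Fin r) F |
      j ≤ Module.finrank F
        (LinearMap.ker (Matrix.toLin' (↑g : Matrix (Fin r) (Fin r) F) - LinearMap.id))} with hSt
  set Tt := {p : GL (Fin r) F × (Fin j → (Fin r → F)) //
      LinearIndependent F p.2 ∧
      ∀ i, Matrix.toLin' (↑p.1 : Matrix (Fin r) (Fin r) F) (p.2 i) = p.2 i} with hTt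
  set M : ℕ := ∏ i : Fin j, (Fintype.card F ^ j - Fintype.card F ^ (i : ℕ)) with hM
  -- lower bound : each bad g contributes at least M pairs
  have lower : Nat.card St * M ≤ Nat.card Tt := by
    haveI : Fintype St := Fintype.ofFinite _
    have hfib : ∀ g : St, M ≤ Nat.card {s : Fin j → (Fin r → F) // LinearIndependent F s ∧
        ∀ i, Matrix.toLin' (↑(g : GL (Fin r) F) : Matrix (Fin r) (Fin r) F) (s i) = s i} := by
      rintro ⟨g, hg⟩
      set K := LinearMap.ker (Matrix.toLin' (↑g : Matrix (Fin r) (Fin r) F) - LinearMap.id) with hK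
      have hg' : j ≤ Module.finrank F K := hg
      have hcount := card_linearIndependent (K := F) (V := K) hg'
      have hinj : Nat.card {s : Fin j → K // LinearIndependent F s} ≤
          Nat.card {s : Fin j → (Fin r → F) // LinearIndependent F s ∧
            ∀ i, Matrix.toLin' (↑g : Matrix (Fin r) (Fin r) F) (s i) = s i} := by
        apply Nat.card_le_card_of_injective
          (fun s => ⟨fun i => (s.1 i : Fin r → F),
            s.2.map' K.subtype (Submodule.ker_subtype K), fun i => by
              have hm := LinearMap.mem_ker.mp (s.1 i).2
              rw [LinearMap.sub_apply, LinearMap.id_apply, sub_eq_zero] at hm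
              exact hm⟩)
        intro s t hst
        have hv := congrArg Subtype.val hst
        exact Subtype.ext (funext fun i => Subtype.ext (congrFun hv i))
      have hMle : M ≤ ∏ i : Fin j,
          (Fintype.card F ^ Module.finrank F K - Fintype.card F ^ (i : ℕ)) := by
        apply Finset.prod_le_prod
        · intro i _; exact Nat.zero_le _
        · intro i _
          have hp : Fintype.card F ^ j ≤ Fintype.card F ^ Module.finrank F K :=
            Nat.pow_le_pow_right Fintype.card_pos hg'
          exact Nat.sub_le_sub_right hp _
      exact le_trans (le_trans hMle hcount.ge) hinj
    calc Nat.card St * M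
        = ∑ _g : St, M := by
          rw [Finset.sum_const, smul_eq_mul, Finset.card_univ, Nat.card_eq_fintype_card]
      _ ≤ ∑ g : St, Nat.card {s : Fin j → (Fin r → F) // LinearIndependent F s ∧
            ∀ i, Matrix.toLin' (↑(g : GL (Fin r) F) : Matrix (Fin r) (Fin r) F) (s i) = s i} :=
          Finset.sum_le_sum (fun g _ => hfib g)
      _ = Nat.card (Σ g : St, {s : Fin j → (Fin r → F) // LinearIndependent F s ∧
            ∀ i, Matrix.toLin' (↑(g : GL (Fin r) F) : Matrix (Fin r) (Fin r) F) (s i) = s i}) := by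
          haveI I : ∀ g : St, Fintype {s : Fin j → (Fin r → F) // LinearIndependent F s ∧
            ∀ i, Matrix.toLin' (↑(g : GL (Fin r) F) : Matrix (Fin r) (Fin r) F) (s i) = s i} :=
            fun g => Fintype.ofFinite _
          rw [Nat.card_eq_fintype_card, Fintype.card_sigma]
          exact Finset.sum_congr rfl (fun g _ => Nat.card_eq_fintype_card)
      _ ≤ Nat.card Tt := by
          apply Nat.card_le_card_of_injective
            (fun x => (⟨(x.1.1, x.2.1), x.2.2.1, x.2.2.2⟩ : Tt))
          rintro ⟨⟨g, hg⟩, ⟨s, hs⟩⟩ ⟨⟨g', hg'⟩, ⟨s', hs'⟩⟩ h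
          have h1 : g = g' := congrArg (fun p : Tt => p.1.1) h
          have h2 : s = s' := congrArg (fun p : Tt => p.1.2) h
          subst h1; subst h2; rfl
  -- upper bound
  have upper : Nat.card Tt ≤ Fintype.card F ^ (r * j) * Fintype.card F ^ (r * (r - j)) := by
    haveI : Fintype {s : Fin j → (Fin r → F) // LinearIndependent F s} := Fintype.ofFinite _
    haveI I2 : ∀ b : {s : Fin j → (Fin r → F) // LinearIndependent F s},
        Fintype {f : (Fin r → F) →ₗ[F] (Fin r → F) // ∀ i, f (b.1 i) = b.1 i} :=
      fun b => Fintype.ofFinite _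
    have step1 : Nat.card Tt ≤
        Nat.card (Σ b : {s : Fin j → (Fin r → F) // LinearIndependent F s},
          {f : (Fin r → F) →ₗ[F] (Fin r → F) // ∀ i, f (b.1 i) = b.1 i}) := by
      apply Nat.card_le_card_of_injective
        (fun p => ⟨⟨p.1.2, p.2.1⟩, ⟨Matrix.toLin' (↑p.1.1 : Matrix (Fin r) (Fin r) F), p.2.2⟩⟩)
      rintro ⟨⟨g, s⟩, hp⟩ ⟨⟨g', s'⟩, hp'⟩ h
      have h1 : s = s' := congrArg (fun x => (x.1.1 : Fin j → (Fin r → F))) h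
      have h2 : Matrix.toLin' (↑g : Matrix (Fin r) (Fin r) F)
          = Matrix.toLin' (↑g' : Matrix (Fin r) (Fin r) F) :=
        congrArg (fun x => (x.2.1 : (Fin r → F) →ₗ[F] (Fin r → F))) h
      have h3 : (↑g : Matrix (Fin r) (Fin r) F) = ↑g' := Matrix.toLin'.injective h2
      have h4 : g = g' := Units.ext h3
      subst h1; subst h4; rfl
    refine step1.trans ?_
    rw [Nat.card_eq_fintype_card, Fintype.card_sigma]
    calc ∑ b : {s : Fin j → (Fin r → F) // LinearIndependent F s},
          Fintype.card {f : (Fin r → F) →ₗ[F] (Fin r → F) // ∀ i, f (b.1 i) = b.1 i}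
        ≤ ∑ _b : {s : Fin j → (Fin r → F) // LinearIndependent F s},
            Fintype.card F ^ (r * (r - j)) := by
          apply Finset.sum_le_sum
          intro b _
          rw [← Nat.card_eq_fintype_card]
          exact card_fixing_le hjr b.1 b.2
      _ = Fintype.card {s : Fin j → (Fin r → F) // LinearIndependent F s}
            * Fintype.card F ^ (r * (r - j)) := by
          rw [Finset.sum_const, smul_eq_mul, Finset.card_univ]
      _ ≤ Fintype.card F ^ (r * j) * Fintype.card F ^ (r * (r - j)) := by
          apply Nat.mul_le_mul_right
          have hs1 : Nat.card {s : Fin j → (Fin r → F) // LinearIndependent F s}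
              ≤ Nat.card (Fin j → (Fin r → F)) :=
            Nat.card_le_card_of_injective _ Subtype.val_injective
          rw [Nat.card_eq_fintype_card, Nat.card_eq_fintype_card] at hs1
          refine hs1.trans ?_
          rw [Fintype.card_fun]
          have hV : Fintype.card (Fin r → F) = Fintype.card F ^ r := by
            simp [Fintype.card_fun]
          rw [hV, Fintype.card_fin, ← pow_mul]
  -- M is large : q ^ (j*j) ≤ 2^j * M
  have hMlarge : Fintype.card F ^ (j * j) ≤ 2 ^ j * M := by
    have h2M : (2 : ℕ) ^ j * M = ∏ i : Fin j,
        (2 * (Fintype.card F ^ j - Fintype.card F ^ (i : ℕ))) := by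
      rw [hM, Finset.prod_mul_distrib, Finset.prod_const]
      simp
    have hqq : Fintype.card F ^ (j * j) = ∏ _i : Fin j, Fintype.card F ^ j := by
      rw [Finset.prod_const, ← pow_mul]
      simp [mul_comm]
    rw [h2M, hqq]
    apply Finset.prod_le_prod
    · intro i _; exact Nat.zero_le _
    · intro i _
      have hi : (i : ℕ) ≤ j - 1 := by omega
      have h1 : Fintype.card F ^ (i : ℕ) ≤ Fintype.card F ^ (j - 1) :=
        Nat.pow_le_pow_right (by omega) hi
      have h2 : 2 * Fintype.card F ^ (j - 1) ≤ Fintype.card F ^ j := by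
        have hqj : Fintype.card F ^ j = Fintype.card F * Fintype.card F ^ (j - 1) := by
          rw [← pow_succ']
          congr 1
          omega
        rw [hqj]
        exact Nat.mul_le_mul_right _ hq2
      have h3 : Fintype.card F ^ (i : ℕ) ≤ Fintype.card F ^ j :=
        Nat.pow_le_pow_right (by omega) (by omega)
      omega
  -- combine
  have key : Nat.card St * Fintype.card F ^ (j * j) ≤ 2 ^ j * Fintype.card F ^ (r * r) := by
    calc Nat.card St * Fintype.card F ^ (j * j) ≤ Nat.card St * (2 ^ j * M) :=
          Nat.mul_le_mul_left _ hMlarge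
      _ = 2 ^ j * (Nat.card St * M) := by ring
      _ ≤ 2 ^ j * (Fintype.card F ^ (r * j) * Fintype.card F ^ (r * (r - j))) :=
          Nat.mul_le_mul_left _ (lower.trans upper)
      _ = 2 ^ j * Fintype.card F ^ (r * r) := by
          rw [← pow_add]
          congr 2
          have hjj : j + (r - j) = r := by omega
          calc r * j + r * (r - j) = r * (j + (r - j)) := (Nat.mul_add r j (r - j)).symm
            _ = r * r := by rw [hjj]
  have hfinal : Nat.card St ≤ 2 ^ j * Fintype.card F ^ (r ^ 2 - j ^ 2) := by
    have hmul : j * j ≤ r * r := Nat.mul_le_mul hjr hjr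
    have hpow : Fintype.card F ^ (r * r)
        = Fintype.card F ^ (r ^ 2 - j ^ 2) * Fintype.card F ^ (j * j) := by
      rw [← pow_add]
      congr 1
      rw [pow_two, pow_two]
      omega
    rw [hpow, ← mul_assoc] at key
    have hqpos : 0 < Fintype.card F ^ (j * j) := Nat.pow_pos (by omega)
    exact Nat.le_of_mul_le_mul_right key hqpos
  calc (Nat.card St : ℝ) ≤ ((2 ^ j * Fintype.card F ^ (r ^ 2 - j ^ 2) : ℕ) : ℝ) := by
        exact_mod_cast hfinal
    _ = (2 : ℝ) ^ j * (Fintype.card F : ℝ) ^ (r ^ 2 - j ^ 2) := by push_cast; ring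
end

section
/- For every integer r ≥ 2 there exists a positive real constant α, depending only on r, such that for every finite field F of cardinality q one has #S(r,F) ≥ (q^r − 1)(q^r − q)⋯(q^r − q^(r−1))/(q − 1) − α·q^(r²−3). -/
open Matrix Finset

namespace CardFixLB

attribute [local instance] Classical.propDecidable

variable {r : ℕ} {F : Type} [Field F] [Fintype F]

lemma card_fix_pow (g : GL (Fin r) F) :
    ∃ d : ℕ, #(univ.filter fun v : Fin r → F => g.1 *ᵥ v = v) = Fintype.card F ^ d := by
  classical
  set W : Submodule F (Fin r → F) := LinearMap.ker (Matrix.mulVecLin (g.1 - 1)) with hW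
  have hmem : ∀ v : Fin r → F, v ∈ W ↔ g.1 *ᵥ v = v := by
    intro v
    rw [hW, LinearMap.mem_ker, Matrix.mulVecLin_apply, Matrix.sub_mulVec, Matrix.one_mulVec,
      sub_eq_zero]
  refine ⟨Module.finrank F W, ?_⟩
  rw [← Fintype.card_subtype]
  rw [Fintype.card_congr (Equiv.subtypeEquivRight fun v => (hmem v).symm)]
  exact Module.card_eq_pow_finrank

lemma inner_count (g : GL (Fin r) F) {u : Fin r → F} (hu : u ≠ 0) (hfu : g.1 *ᵥ u = u) :
    #(univ.filter fun v : Fin r → F => g.1 *ᵥ v = v ∧ ∀ a : F, a • u ≠ v)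
      = #(univ.filter fun v : Fin r → F => g.1 *ᵥ v = v) - Fintype.card F := by
  classical
  have himsub : (univ.image fun a : F => a • u) ⊆ univ.filter fun v : Fin r → F => g.1 *ᵥ v = v := by
    intro v hv
    simp only [mem_image, mem_univ, true_and] at hv
    obtain ⟨a, rfl⟩ := hv
    simp only [mem_filter, mem_univ, true_and]
    rw [Matrix.mulVec_smul, hfu]
  have hset : (univ.filter fun v : Fin r → F => g.1 *ᵥ v = v ∧ ∀ a : F, a • u ≠ v)
      = (univ.filter fun v : Fin r → F => g.1 *ᵥ v = v) \ (univ.image fun a : F => a • u) := by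
    ext v
    simp only [mem_filter, mem_univ, true_and, mem_sdiff, mem_image, not_exists]
  rw [hset, card_sdiff_of_subset himsub, Finset.card_image_of_injective _ (smul_left_injective F hu),
    card_univ]

lemma zero_fixed (g : GL (Fin r) F) :
    (0 : Fin r → F) ∈ univ.filter fun v : Fin r → F => g.1 *ᵥ v = v := by
  simp [Matrix.mulVec_zero]

lemma pair_fubini (g : GL (Fin r) F) :
    #(univ.filter fun p : (Fin r → F) × (Fin r → F) =>
        (p.1 ≠ 0 ∧ g.1 *ᵥ p.1 = p.1) ∧ (g.1 *ᵥ p.2 = p.2 ∧ ∀ a : F, a • p.1 ≠ p.2))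
      = ∑ u ∈ univ.filter (fun u : Fin r → F => u ≠ 0 ∧ g.1 *ᵥ u = u),
          #(univ.filter fun v : Fin r → F => g.1 *ᵥ v = v ∧ ∀ a : F, a • u ≠ v) := by
  classical
  rw [card_filter, Fintype.sum_prod_type, Finset.sum_filter]
  refine Finset.sum_congr rfl fun u _ => ?_
  by_cases h : u ≠ 0 ∧ g.1 *ᵥ u = u
  · rw [if_pos h, card_filter]
    refine Finset.sum_congr rfl fun v _ => ?_
    simp [h]
  · rw [if_neg h]
    refine Finset.sum_eq_zero fun v _ => ?_
    simp only [ite_eq_right_iff]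
    intro hc
    exact absurd hc.1 h

lemma numeric {q m : ℕ} (hq : 2 ≤ q) (hm : q ^ 2 ≤ m) :
    (q ^ 2 - 1) * (m - 1) ≤ (q ^ 2 - 1) * (q - 1) + (m - 1) * (m - q) := by
  have h1 : (1:ℕ) ≤ q := by omega
  have h2 : (1:ℕ) ≤ q ^ 2 := by nlinarith
  have hqm : q ≤ m := le_trans (by nlinarith) hm
  have h1m : 1 ≤ m := by omega
  zify [h1, h2, hqm, h1m]
  nlinarith [sq_nonneg ((m:ℤ) - q^2), sq_nonneg ((q:ℤ) - 1)]

lemma erase_card (g : GL (Fin r) F) :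
    #(univ.filter fun v : Fin r → F => v ≠ 0 ∧ g.1 *ᵥ v = v)
      = #(univ.filter fun v : Fin r → F => g.1 *ᵥ v = v) - 1 := by
  classical
  have : (univ.filter fun v : Fin r → F => v ≠ 0 ∧ g.1 *ᵥ v = v)
      = (univ.filter fun v : Fin r → F => g.1 *ᵥ v = v).erase 0 := by
    ext v
    simp only [mem_filter, mem_univ, true_and, mem_erase]
  rw [this, Finset.card_erase_of_mem (zero_fixed g)]

/-- the key per-element inequality -/
lemma per_g (g : GL (Fin r) F) :
    (Fintype.card F ^ 2 - 1) * #(univ.filter fun v : Fin r → F => v ≠ 0 ∧ g.1 *ᵥ v = v)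
      ≤ (Fintype.card F ^ 2 - 1) * (Fintype.card F - 1) *
          (if ∃ v : Fin r → F, v ≠ 0 ∧ g.1 *ᵥ v = v then 1 else 0)
        + #(univ.filter fun p : (Fin r → F) × (Fin r → F) =>
            (p.1 ≠ 0 ∧ g.1 *ᵥ p.1 = p.1) ∧ (g.1 *ᵥ p.2 = p.2 ∧ ∀ a : F, a • p.1 ≠ p.2)) := by
  classical
  set q := Fintype.card F with hqdef
  have hq : 2 ≤ q := Fintype.one_lt_card
  by_cases hS : ∃ v : Fin r → F, v ≠ 0 ∧ g.1 *ᵥ v = v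
  · rw [if_pos hS]
    obtain ⟨d, hd⟩ := card_fix_pow g
    set m := #(univ.filter fun v : Fin r → F => g.1 *ᵥ v = v) with hmdef
    rw [erase_card g]
    have hm2 : 2 ≤ m := by
      obtain ⟨v, hv0, hvf⟩ := hS
      refine Finset.one_lt_card.mpr ⟨0, zero_fixed g, v, ?_, fun h => hv0 h.symm⟩
      simp [hvf]
    -- d ≥ 1
    rcases Nat.lt_or_ge d 2 with hd2 | hd2
    · -- d = 0 or 1, so m ≤ q; m ≥ 2 forces d = 1, m = q
      interval_cases d
      · rw [pow_zero] at hd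
        omega
      · rw [← hmdef, hd, pow_one, mul_one]
        exact Nat.le_add_right _ _
    · -- d ≥ 2 : use pair count
      have hmq2 : q ^ 2 ≤ m := by
        rw [hd]; exact Nat.pow_le_pow_right (by omega) hd2
      have hpair : (m - 1) * (m - q) ≤
          #(univ.filter fun p : (Fin r → F) × (Fin r → F) =>
            (p.1 ≠ 0 ∧ g.1 *ᵥ p.1 = p.1) ∧ (g.1 *ᵥ p.2 = p.2 ∧ ∀ a : F, a • p.1 ≠ p.2)) := by
        rw [pair_fubini g]
        have : ∀ u ∈ univ.filter (fun u : Fin r → F => u ≠ 0 ∧ g.1 *ᵥ u = u),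
            #(univ.filter fun v : Fin r → F => g.1 *ᵥ v = v ∧ ∀ a : F, a • u ≠ v) = m - q := by
          intro u hu
          simp only [mem_filter, mem_univ, true_and] at hu
          exact inner_count g hu.1 hu.2
        rw [Finset.sum_congr rfl this, Finset.sum_const, erase_card g, smul_eq_mul]
      calc (q ^ 2 - 1) * (m - 1) ≤ (q ^ 2 - 1) * (q - 1) + (m - 1) * (m - q) :=
            numeric hq hmq2
        _ ≤ _ := by
            rw [mul_one]
            exact Nat.add_le_add_left hpair _
  · rw [if_neg hS]
    have : (univ.filter fun v : Fin r → F => v ≠ 0 ∧ g.1 *ᵥ v = v) = ∅ := by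
      rw [Finset.filter_eq_empty_iff]
      intro v _
      push_neg at hS
      intro h
      exact absurd (hS v h.1) (by simp [h.2])
    simp [this]


lemma pair_stab_bound {u v : Fin r → F} (hu : u ≠ 0) (huv : ∀ a : F, a • u ≠ v) :
    #(univ.filter fun g : GL (Fin r) F => g.1 *ᵥ u = u ∧ g.1 *ᵥ v = v)
      ≤ (Fintype.card F ^ r) ^ (r - 2) := by
  classical
  have hind2 : LinearIndependent F ![v, u] := by
    rw [linearIndependent_fin2]
    refine ⟨by simpa using hu, fun a => by simpa using huv a⟩
  have hs := (linearIndepOn_id_range_iff hind2.injective).mpr hind2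
  set s : Set (Fin r → F) := Set.range ![v, u] with hsdef
  have hus : u ∈ s := ⟨1, by simp⟩
  have hvs : v ∈ s := ⟨0, by simp⟩
  set t : Set (Fin r → F) := hs.extend (Set.subset_univ s) with htdef
  have hut : u ∈ t := hs.subset_extend _ hus
  have hvt : v ∈ t := hs.subset_extend _ hvs
  have huv' : u ≠ v := by simpa using huv 1
  let b : Module.Basis t F (Fin r → F) := Module.Basis.extend hs
  have hcardt : Fintype.card t = r := by
    rw [← Module.finrank_eq_card_basis b, Module.finrank_fintype_fun_eq_card, Fintype.card_fin]
  -- the index subtype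
  have hcardP : 2 ≤ Fintype.card {x : t // (x : Fin r → F) = u ∨ (x : Fin r → F) = v} := by
    exact Fintype.one_lt_card_iff.mpr
        ⟨⟨⟨u, hut⟩, Or.inl rfl⟩, ⟨⟨v, hvt⟩, Or.inr rfl⟩, by
          intro h
          exact huv' (congrArg (fun y => ((y : t) : Fin r → F)) (congrArg Subtype.val h))⟩
  have hcardX : Fintype.card {x : t // (x : Fin r → F) ≠ u ∧ (x : Fin r → F) ≠ v} ≤ r - 2 := by
    have := Fintype.card_subtype_compl (fun x : t => (x : Fin r → F) = u ∨ (x : Fin r → F) = v)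
    have heq : Fintype.card {x : t // (x : Fin r → F) ≠ u ∧ (x : Fin r → F) ≠ v}
        = Fintype.card {x : t // ¬((x : Fin r → F) = u ∨ (x : Fin r → F) = v)} :=
      Fintype.card_congr (Equiv.subtypeEquivRight fun x => by tauto)
    rw [heq, this, hcardt]
    omega
  -- injection from the stabilizer into functions
  rw [← Fintype.card_subtype]
  have hinj : Function.Injective
      (fun (g : {g : GL (Fin r) F // g.1 *ᵥ u = u ∧ g.1 *ᵥ v = v})
        (x : {x : t // (x : Fin r → F) ≠ u ∧ (x : Fin r → F) ≠ v}) =>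
          (g.1.1 *ᵥ (x.1 : Fin r → F) : Fin r → F)) := by
    intro g₁ g₂ h
    have hmat : Matrix.toLin' g₁.1.1 = Matrix.toLin' g₂.1.1 := by
      apply b.ext
      intro x
      rw [show b x = (x : Fin r → F) from Module.Basis.extend_apply_self hs x]
      rw [Matrix.toLin'_apply, Matrix.toLin'_apply]
      by_cases hxu : (x : Fin r → F) = u
      · rw [hxu, g₁.2.1, g₂.2.1]
      · by_cases hxv : (x : Fin r → F) = v
        · rw [hxv, g₁.2.2, g₂.2.2]
        · exact congrFun h ⟨x, hxu, hxv⟩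
    have : g₁.1.1 = g₂.1.1 := Matrix.toLin'.injective hmat
    exact Subtype.ext (Units.ext this)
  calc Fintype.card {g : GL (Fin r) F // g.1 *ᵥ u = u ∧ g.1 *ᵥ v = v}
      ≤ Fintype.card ({x : t // (x : Fin r → F) ≠ u ∧ (x : Fin r → F) ≠ v} → (Fin r → F)) :=
        Fintype.card_le_of_injective _ hinj
    _ = (Fintype.card F ^ r) ^ Fintype.card {x : t // (x : Fin r → F) ≠ u ∧ (x : Fin r → F) ≠ v} := by
        rw [Fintype.card_fun, Fintype.card_fun, Fintype.card_fin]
    _ ≤ (Fintype.card F ^ r) ^ (r - 2) :=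
        Nat.pow_le_pow_right (Nat.one_le_pow _ _ Fintype.card_pos) hcardX


local instance actGL : MulAction (GL (Fin r) F) (Fin r → F) where
  smul g w := g.1 *ᵥ w
  one_smul w := by
    show (1 : GL (Fin r) F).1 *ᵥ w = w
    rw [Units.val_one, Matrix.one_mulVec]
  mul_smul g h w := by
    show (g * h).1 *ᵥ w = g.1 *ᵥ (h.1 *ᵥ w)
    rw [Units.val_mul, Matrix.mulVec_mulVec]

lemma stab_lower {v : Fin r → F} (hv : v ≠ 0) :
    Fintype.card (GL (Fin r) F)
      ≤ (Fintype.card F ^ r - 1) * #(univ.filter fun g : GL (Fin r) F => g.1 *ᵥ v = v) := by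
  classical
  have hsmul : ∀ (g : GL (Fin r) F) (w : Fin r → F), g • w = g.1 *ᵥ w := fun _ _ => rfl
  have hstab : Fintype.card (MulAction.stabilizer (GL (Fin r) F) v)
      = #(univ.filter fun g : GL (Fin r) F => g.1 *ᵥ v = v) := by
    rw [← Fintype.card_subtype]
    exact Fintype.card_congr (Equiv.subtypeEquivRight fun g => by
      rw [MulAction.mem_stabilizer_iff, hsmul])
  have horb : Fintype.card (MulAction.orbit (GL (Fin r) F) v) ≤ Fintype.card F ^ r - 1 := by
    have hne : ∀ w ∈ MulAction.orbit (GL (Fin r) F) v, w ≠ 0 := by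
      rintro w ⟨g, rfl⟩ h0
      apply hv
      have hvv : v = g⁻¹ • (g • v) := (inv_smul_smul g v).symm
      simp only at h0
      rw [h0, hsmul, Matrix.mulVec_zero] at hvv
      exact hvv
    have hinj : Function.Injective
        (fun w : MulAction.orbit (GL (Fin r) F) v => (⟨w.1, hne w.1 w.2⟩ : {w : Fin r → F // w ≠ 0})) := by
      intro a b h
      exact Subtype.ext (by simpa using congrArg Subtype.val h)
    calc Fintype.card (MulAction.orbit (GL (Fin r) F) v)
        ≤ Fintype.card {w : Fin r → F // w ≠ 0} := Fintype.card_le_of_injective _ hinj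
      _ = Fintype.card F ^ r - 1 := by
          have := Fintype.card_subtype_compl (fun w : Fin r → F => w = 0)
          have h2 : Fintype.card {w : Fin r → F // w ≠ 0}
              = Fintype.card {w : Fin r → F // ¬(w = 0)} := rfl
          rw [h2, this, Fintype.card_subtype_eq, Fintype.card_fun, Fintype.card_fin]
  calc Fintype.card (GL (Fin r) F)
      = Fintype.card (MulAction.orbit (GL (Fin r) F) v)
          * Fintype.card (MulAction.stabilizer (GL (Fin r) F) v) :=
        (MulAction.card_orbit_mul_card_stabilizer_eq_card_group _ v).symm
    _ ≤ (Fintype.card F ^ r - 1) * #(univ.filter fun g : GL (Fin r) F => g.1 *ᵥ v = v) := by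
        rw [hstab]
        exact Nat.mul_le_mul_right _ horb


lemma nat_main (hr : 2 ≤ r) :
    (Fintype.card F ^ 2 - 1) * Fintype.card (GL (Fin r) F)
      ≤ (Fintype.card F ^ 2 - 1) * (Fintype.card F - 1) *
          #(univ.filter fun g : GL (Fin r) F => ∃ v : Fin r → F, v ≠ 0 ∧ g.1 *ᵥ v = v)
        + Fintype.card F ^ (r ^ 2) := by
  classical
  set q := Fintype.card F with hq
  have hq2 : 2 ≤ q := Fintype.one_lt_card
  -- Step 1: card G ≤ ∑ v, stab-ish count
  have hqr1 : 1 ≤ q ^ r := Nat.one_le_pow _ _ (by omega)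
  have hqr2 : 2 ≤ q ^ r := le_trans hq2 (Nat.le_self_pow (by omega) q)
  -- number of nonzero vectors
  have hcard0 : #(univ.filter fun v : Fin r → F => v ≠ 0) = q ^ r - 1 := by
    have : (univ.filter fun v : Fin r → F => v ≠ 0) = univ.erase 0 := by
      ext v; simp
    rw [this, Finset.card_erase_of_mem (mem_univ _), card_univ, Fintype.card_fun,
      Fintype.card_fin]
  -- Step 1 : cardG ≤ N1'
  have step1 : Fintype.card (GL (Fin r) F)
      ≤ ∑ v : Fin r → F, #(univ.filter fun g : GL (Fin r) F => v ≠ 0 ∧ g.1 *ᵥ v = v) := by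
    refine Nat.le_of_mul_le_mul_left ?_ (show 0 < q ^ r - 1 by omega)
    calc (q ^ r - 1) * Fintype.card (GL (Fin r) F)
        = ∑ v ∈ univ.filter (fun v : Fin r → F => v ≠ 0), Fintype.card (GL (Fin r) F) := by
          rw [Finset.sum_const, hcard0, smul_eq_mul]
      _ ≤ ∑ v ∈ univ.filter (fun v : Fin r → F => v ≠ 0),
            (q ^ r - 1) * #(univ.filter fun g : GL (Fin r) F => v ≠ 0 ∧ g.1 *ᵥ v = v) := by
          refine Finset.sum_le_sum fun v hv => ?_
          simp only [mem_filter, mem_univ, true_and] at hv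
          refine le_trans (stab_lower hv) ?_
          apply Nat.mul_le_mul_left
          apply Finset.card_le_card
          intro g hg
          simp only [mem_filter, mem_univ, true_and] at hg ⊢
          exact ⟨hv, hg⟩
      _ ≤ ∑ v : Fin r → F,
            (q ^ r - 1) * #(univ.filter fun g : GL (Fin r) F => v ≠ 0 ∧ g.1 *ᵥ v = v) :=
          Finset.sum_le_sum_of_subset (Finset.filter_subset _ _)
      _ = (q ^ r - 1) * ∑ v : Fin r → F,
            #(univ.filter fun g : GL (Fin r) F => v ≠ 0 ∧ g.1 *ᵥ v = v) := by
          rw [Finset.mul_sum]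
  -- Step 2 : swap
  have step2 : ∑ v : Fin r → F, #(univ.filter fun g : GL (Fin r) F => v ≠ 0 ∧ g.1 *ᵥ v = v)
      = ∑ g : GL (Fin r) F, #(univ.filter fun v : Fin r → F => v ≠ 0 ∧ g.1 *ᵥ v = v) := by
    simp only [card_filter]
    exact Finset.sum_comm
  -- Step 4 : pair count bound
  have step4 : ∑ g : GL (Fin r) F,
      #(univ.filter fun p : (Fin r → F) × (Fin r → F) =>
        (p.1 ≠ 0 ∧ g.1 *ᵥ p.1 = p.1) ∧ (g.1 *ᵥ p.2 = p.2 ∧ ∀ a : F, a • p.1 ≠ p.2))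
      ≤ q ^ (r ^ 2) := by
    have hswap : ∑ g : GL (Fin r) F,
        #(univ.filter fun p : (Fin r → F) × (Fin r → F) =>
          (p.1 ≠ 0 ∧ g.1 *ᵥ p.1 = p.1) ∧ (g.1 *ᵥ p.2 = p.2 ∧ ∀ a : F, a • p.1 ≠ p.2))
        = ∑ p : (Fin r → F) × (Fin r → F),
          #(univ.filter fun g : GL (Fin r) F =>
            (p.1 ≠ 0 ∧ g.1 *ᵥ p.1 = p.1) ∧ (g.1 *ᵥ p.2 = p.2 ∧ ∀ a : F, a • p.1 ≠ p.2)) := by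
      simp only [card_filter]
      exact Finset.sum_comm
    rw [hswap]
    have hbound : ∀ p : (Fin r → F) × (Fin r → F),
        #(univ.filter fun g : GL (Fin r) F =>
          (p.1 ≠ 0 ∧ g.1 *ᵥ p.1 = p.1) ∧ (g.1 *ᵥ p.2 = p.2 ∧ ∀ a : F, a • p.1 ≠ p.2))
        ≤ (q ^ r) ^ (r - 2) := by
      intro p
      by_cases hp : p.1 ≠ 0 ∧ ∀ a : F, a • p.1 ≠ p.2
      · refine le_trans (Finset.card_le_card ?_) (pair_stab_bound hp.1 hp.2)
        intro g hg
        simp only [mem_filter, mem_univ, true_and] at hg ⊢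
        exact ⟨hg.1.2, hg.2.1⟩
      · push_neg at hp
        by_cases h0 : p.1 = 0
        · rw [Finset.card_eq_zero.mpr ?_]
          · omega
          · rw [Finset.filter_eq_empty_iff]
            intro g _ hg
            exact hg.1.1 h0
        · obtain ⟨a, ha⟩ := hp h0
          rw [Finset.card_eq_zero.mpr ?_]
          · omega
          · rw [Finset.filter_eq_empty_iff]
            intro g _ hg
            exact hg.2.2 a ha
    calc ∑ p : (Fin r → F) × (Fin r → F),
        #(univ.filter fun g : GL (Fin r) F =>
          (p.1 ≠ 0 ∧ g.1 *ᵥ p.1 = p.1) ∧ (g.1 *ᵥ p.2 = p.2 ∧ ∀ a : F, a • p.1 ≠ p.2))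
        ≤ ∑ _p : (Fin r → F) × (Fin r → F), (q ^ r) ^ (r - 2) :=
          Finset.sum_le_sum fun p _ => hbound p
      _ = (q ^ r) ^ 2 * (q ^ r) ^ (r - 2) := by
          rw [Finset.sum_const, card_univ, Fintype.card_prod, Fintype.card_fun,
            Fintype.card_fin, smul_eq_mul, sq]
      _ = q ^ (r ^ 2) := by
          rw [← pow_add, show 2 + (r - 2) = r from by omega, ← pow_mul, ← sq]
  -- combine
  calc (q ^ 2 - 1) * Fintype.card (GL (Fin r) F)
      ≤ (q ^ 2 - 1) * ∑ g : GL (Fin r) F,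
          #(univ.filter fun v : Fin r → F => v ≠ 0 ∧ g.1 *ᵥ v = v) := by
        rw [← step2]
        exact Nat.mul_le_mul_left _ step1
    _ = ∑ g : GL (Fin r) F,
          (q ^ 2 - 1) * #(univ.filter fun v : Fin r → F => v ≠ 0 ∧ g.1 *ᵥ v = v) := by
        rw [Finset.mul_sum]
    _ ≤ ∑ g : GL (Fin r) F,
          ((q ^ 2 - 1) * (q - 1) * (if ∃ v : Fin r → F, v ≠ 0 ∧ g.1 *ᵥ v = v then 1 else 0)
            + #(univ.filter fun p : (Fin r → F) × (Fin r → F) =>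
                (p.1 ≠ 0 ∧ g.1 *ᵥ p.1 = p.1) ∧ (g.1 *ᵥ p.2 = p.2 ∧ ∀ a : F, a • p.1 ≠ p.2))) :=
        Finset.sum_le_sum fun g _ => per_g g
    _ = (q ^ 2 - 1) * (q - 1) *
          #(univ.filter fun g : GL (Fin r) F => ∃ v : Fin r → F, v ≠ 0 ∧ g.1 *ᵥ v = v)
        + ∑ g : GL (Fin r) F,
            #(univ.filter fun p : (Fin r → F) × (Fin r → F) =>
              (p.1 ≠ 0 ∧ g.1 *ᵥ p.1 = p.1) ∧ (g.1 *ᵥ p.2 = p.2 ∧ ∀ a : F, a • p.1 ≠ p.2)) := by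
        rw [Finset.sum_add_distrib, ← Finset.mul_sum, card_filter]
    _ ≤ _ := Nat.add_le_add_left step4 _


end CardFixLB

open CardFixLB in
/-- For every integer `r ≥ 2` there exists a positive real constant `α`, depending only on
`r`, such that for every finite field `F` of cardinality `q` one has
`#S(r, F) ≥ (q^r - 1)(q^r - q)⋯(q^r - q^(r-1))/(q - 1) - α * q^(r² - 3)`, where `S(r, F)`
is the set of invertible matrices fixing some nonzero vector. -/
theorem card_fixing_matrices_lower_bound (r : ℕ) (hr : 2 ≤ r) :
    ∃ α : ℝ, 0 < α ∧
      ∀ (F : Type) [Field F] [Fintype F],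
        (∏ i ∈ Finset.range r, ((Fintype.card F : ℝ) ^ r - (Fintype.card F : ℝ) ^ i)) /
              ((Fintype.card F : ℝ) - 1) -
            α * (Fintype.card F : ℝ) ^ (r ^ 2 - 3) ≤
          (Nat.card {g : GL (Fin r) F |
            ∃ v : Fin r → F, v ≠ 0 ∧ Matrix.mulVec (↑g) v = v} : ℝ) := by
  classical
  refine ⟨4, by norm_num, ?_⟩
  intro F _ _
  classical
  set q := Fintype.card F with hqdef
  have hq2 : 2 ≤ q := Fintype.one_lt_card
  have h4r : 4 ≤ r ^ 2 := by calc 4 = 2 ^ 2 := by norm_num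
                                 _ ≤ r ^ 2 := Nat.pow_le_pow_left hr 2
  -- identify the Nat.card with a filter card
  have hScard : (Nat.card {g : GL (Fin r) F |
      ∃ v : Fin r → F, v ≠ 0 ∧ Matrix.mulVec (↑g) v = v})
      = #(univ.filter fun g : GL (Fin r) F => ∃ v : Fin r → F, v ≠ 0 ∧ g.1 *ᵥ v = v) := by
    rw [Nat.card_eq_fintype_card]
    rw [← Fintype.card_subtype]
    apply Fintype.card_congr
    exact Equiv.subtypeEquivRight fun g => Iff.rfl
  -- the GL cardinality
  have hGL : Fintype.card (GL (Fin r) F) = ∏ i ∈ Finset.range r, (q ^ r - q ^ i) := by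
    rw [← Nat.card_eq_fintype_card, Matrix.card_GL_field]
    exact Fin.prod_univ_eq_prod_range (fun i => q ^ r - q ^ i) r
  have hnat := nat_main (r := r) (F := F) hr
  rw [hGL] at hnat
  -- casts
  set Q : ℝ := (q : ℝ) with hQdef
  have hQ2 : (2 : ℝ) ≤ Q := by rw [hQdef]; exact_mod_cast hq2
  have hprodcast : ((∏ i ∈ Finset.range r, (q ^ r - q ^ i) : ℕ) : ℝ)
      = ∏ i ∈ Finset.range r, (Q ^ r - Q ^ i) := by
    rw [Nat.cast_prod]
    refine Finset.prod_congr rfl fun i hi => ?_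
    rw [Nat.cast_sub (Nat.pow_le_pow_right (by omega) (le_of_lt (Finset.mem_range.mp hi)))]
    push_cast
    ring
  set s : ℝ := (#(univ.filter fun g : GL (Fin r) F =>
      ∃ v : Fin r → F, v ≠ 0 ∧ g.1 *ᵥ v = v) : ℝ) with hsdef
  have hs0 : 0 ≤ s := Nat.cast_nonneg _
  have H : (Q ^ 2 - 1) * (∏ i ∈ Finset.range r, (Q ^ r - Q ^ i))
      ≤ (Q ^ 2 - 1) * (Q - 1) * s + Q ^ (r ^ 2) := by
    have := (Nat.cast_le (α := ℝ)).mpr hnat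
    rw [Nat.cast_add, Nat.cast_mul, Nat.cast_mul, Nat.cast_mul, hprodcast,
      Nat.cast_sub (by nlinarith : 1 ≤ q ^ 2), Nat.cast_sub (by omega : 1 ≤ q),
      Nat.cast_pow] at this
    push_cast at this ⊢
    convert this using 2
  -- final arithmetic
  rw [hScard]
  have hQ1 : (0 : ℝ) < Q - 1 := by linarith
  have hQ21 : (0 : ℝ) < Q ^ 2 - 1 := by nlinarith
  have hpow3 : Q ^ (r ^ 2 - 3) * Q ^ 3 = Q ^ (r ^ 2) := by
    rw [← pow_add]
    congr 1
    omega
  have h43 : Q ^ 3 ≤ 4 * (Q - 1) * (Q ^ 2 - 1) := by nlinarith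
  have hk0 : (0 : ℝ) ≤ Q ^ (r ^ 2 - 3) := by positivity
  rw [sub_le_iff_le_add, div_le_iff₀ hQ1]
  have key : (∏ i ∈ Finset.range r, (Q ^ r - Q ^ i)) * (Q ^ 2 - 1)
      ≤ ((s + 4 * Q ^ (r ^ 2 - 3)) * (Q - 1)) * (Q ^ 2 - 1) := by
    nlinarith [mul_nonneg hk0 (by nlinarith : (0:ℝ) ≤ 4 * (Q - 1) * (Q ^ 2 - 1) - Q ^ 3)]
  exact le_of_mul_le_mul_right key hQ21
end
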